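/- arXiv:2204.11342 — 3 statements merged into one kernel-verified Lean document; each statement's English description precedes it below -/
import Mathlib

section
/- Let γ ∈ ℝ, let p ∈ [1,∞], take the specific forcing term f(x,t) := (1+t)^{-γ} 𝟙_{B_1(0)}(x), and let g : (0,∞) → (0,∞) be measurable with g(t) → ∞ and g(t)/t^θ → 0 as t → ∞. Then for all 0 < ν < μ < ∞ there exist c > 0 and T ≥ 2 such that for all t ≥ T the mild solution u satisfies: if N < 4β, ‖u(·,t)‖_{L^p({x : ν g(t) < |x| < μ g(t)})} ≥ c g(t)^{N/p} R(t) with R(t) = t^{-σ*+1-γ} for γ < 1, t^{-σ*} log t for γ = 1, t^{-σ*} for γ > 1; and if N = 4β, the same lower bound holds with R(t) replaced by log(t^θ/g(t)) R(t) (with g(t)^{N/p} := 1 when p = ∞). (This shows the intermediate-region upper estimates are sharp.) -/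
open MeasureTheory Real Set Pointwise
open scoped ENNReal

noncomputable section

/-- Euclidean space ℝ^N. -/
abbrev Euc (N : ℕ) : Type := EuclideanSpace ℝ (Fin N)

/-- The self-similarity exponent θ := α/(2β). -/
def thetaV (α β : ℝ) : ℝ := α / (2 * β)

/-- σ* := 1 - α + Nθ. -/
def sigmaStar (N : ℕ) (α β : ℝ) : ℝ := 1 - α + (N : ℝ) * thetaV α β

/-- σ(p) := σ* - Nθ/p (with σ(∞) = σ*, since (∞ : ℝ≥0∞).toReal = 0 and x/0 = 0). -/
def sigmaP (N : ℕ) (α β : ℝ) (p : ℝ≥0∞) : ℝ :=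
  sigmaStar N α β - (N : ℝ) * thetaV α β / p.toReal

/-- p ∈ [1,∞] is subcritical: p arbitrary if N < 2β, p < ∞ if N = 2β,
and p < p_c := N/(N-2β) if N > 2β. -/
def Subcritical (N : ℕ) (β : ℝ) (p : ℝ≥0∞) : Prop :=
  ((N : ℝ) < 2 * β) ∨ ((N : ℝ) = 2 * β ∧ p ≠ ∞) ∨
    (2 * β < (N : ℝ) ∧ p < ENNReal.ofReal ((N : ℝ) / ((N : ℝ) - 2 * β)))

/-- The kernel Y(x,t) := t^{-σ*} G(x t^{-θ}). -/
def kernelY (N : ℕ) (α β : ℝ) (G : Euc N → ℝ) (x : Euc N) (t : ℝ) : ℝ :=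
  t ^ (-(sigmaStar N α β)) * G ((t ^ (-(thetaV α β))) • x)

/-- The mild solution given by Duhamel's formula:
u(x,t) = ∫₀^t ∫_{ℝ^N} Y(x-y,t-s) f(y,s) dy ds. -/
def mildSol (N : ℕ) (α β : ℝ) (G : Euc N → ℝ) (f : Euc N → ℝ → ℝ) (x : Euc N) (t : ℝ) : ℝ :=
  ∫ s in Ioo (0 : ℝ) t, ∫ y, kernelY N α β G (x - y) (t - s) * f y s

lemma measurable_rpow_const' (c : ℝ) : Measurable fun x : ℝ => x ^ c :=
  measurable_of_continuousOn_compl_singleton 0 fun x hx =>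
    (Real.continuousAt_rpow_const x c (Or.inl hx)).continuousWithinAt

variable {N : ℕ}

lemma indicator_eq_aux (γ s : ℝ) (y : Euc N) :
    Set.indicator (Metric.ball (0 : Euc N) 1) (fun _ => (1 + s) ^ (-γ)) y
      = (1 + s) ^ (-γ) * Set.indicator (Metric.ball (0 : Euc N) 1) (fun _ => (1:ℝ)) y := by
  by_cases h : y ∈ Metric.ball (0 : Euc N) 1 <;> simp [h]

lemma measH {G : Euc N → ℝ} (hGcont : ContinuousOn G {(0 : Euc N)}ᶜ)
    (α β : ℝ) (x : Euc N) (t γ : ℝ) :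
    Measurable (fun q : ℝ × Euc N =>
      kernelY N α β G (x - q.2) (t - q.1) *
        Set.indicator (Metric.ball (0 : Euc N) 1) (fun _ => (1 + q.1) ^ (-γ)) q.2) := by
  have hG : Measurable G := measurable_of_continuousOn_compl_singleton 0 hGcont
  have hsub : Measurable fun q : ℝ × Euc N => t - q.1 := measurable_const.sub measurable_fst
  have h1 : Measurable fun q : ℝ × Euc N => (t - q.1) ^ (-(sigmaStar N α β)) :=
    (measurable_rpow_const' _).comp hsub
  have h2 : Measurable fun q : ℝ × Euc N => ((t - q.1) ^ (-(thetaV α β))) • (x - q.2) := by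
    have hs : Measurable fun q : ℝ × Euc N => (t - q.1) ^ (-(thetaV α β)) :=
      (measurable_rpow_const' _).comp hsub
    have hv : Measurable fun q : ℝ × Euc N => x - q.2 := measurable_const.sub measurable_snd
    exact (continuous_smul.measurable).comp (hs.prodMk hv)
  have hker : Measurable fun q : ℝ × Euc N => kernelY N α β G (x - q.2) (t - q.1) := by
    simp only [kernelY]
    exact h1.mul (hG.comp h2)
  have hind : Measurable fun q : ℝ × Euc N =>
      Set.indicator (Metric.ball (0 : Euc N) 1) (fun _ => (1 + q.1) ^ (-γ)) q.2 := by
    have heq : (fun q : ℝ × Euc N =>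
        Set.indicator (Metric.ball (0 : Euc N) 1) (fun _ => (1 + q.1) ^ (-γ)) q.2)
        = fun q : ℝ × Euc N => (1 + q.1) ^ (-γ) *
            Set.indicator (Metric.ball (0 : Euc N) 1) (fun _ => (1:ℝ)) q.2 := by
      funext q; exact indicator_eq_aux γ q.1 q.2
    rw [heq]
    exact ((measurable_rpow_const' _).comp (measurable_const.add measurable_fst)).mul
      ((measurable_const.indicator measurableSet_ball).comp measurable_snd)
  exact hker.mul hind

lemma kernelY_upper
    (α β : ℝ) (hα0 : 0 < α) (hα1 : α < 1) (hβ0 : 0 < β)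
    {G : Euc N → ℝ} {C₁ : ℝ} (hC₁ : 0 < C₁)
    (hGpos : ∀ ξ : Euc N, ξ ≠ 0 → 0 < G ξ)
    (hGout : ∀ ξ : Euc N, 1 ≤ ‖ξ‖ → G ξ ≤ C₁ * ‖ξ‖ ^ (-((N : ℝ) + 2 * β)))
    (hGlog : ∀ ξ : Euc N, ξ ≠ 0 → ‖ξ‖ ≤ 1 → G ξ ≤ C₁ * (1 + |Real.log ‖ξ‖|))
    {t : ℝ} (ht : 1 ≤ t) {z : Euc N} (hz : 1 ≤ ‖z‖) {r : ℝ} (hr : 0 < r) (hrt : r ≤ t) :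
    kernelY N α β G z r ≤ C₁ * r ^ (2 * α - 1) + C₁ * (1 + thetaV α β * Real.log t) := by
  have hθ : 0 < thetaV α β := div_pos hα0 (by linarith)
  have hz0 : z ≠ 0 := by intro h; rw [h, norm_zero] at hz; linarith
  have hrθ : 0 < r ^ (-(thetaV α β)) := Real.rpow_pos_of_pos hr _
  set ξ := (r ^ (-(thetaV α β))) • z with hξdef
  have hξn : ‖ξ‖ = r ^ (-(thetaV α β)) * ‖z‖ := by
    rw [hξdef, norm_smul, Real.norm_eq_abs, abs_of_pos hrθ]
  have hξ0 : ξ ≠ 0 := smul_ne_zero (ne_of_gt hrθ) hz0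
  have hlogt : 0 ≤ Real.log t := Real.log_nonneg ht
  have hterm2 : 0 ≤ C₁ * (1 + thetaV α β * Real.log t) := by positivity
  have hkY : kernelY N α β G z r = r ^ (-(sigmaStar N α β)) * G ξ := rfl
  have hNe : 0 ≤ (N : ℝ) + 2 * β := by positivity
  rcases le_or_gt 1 ‖ξ‖ with h1 | h1
  · have hGb := hGout ξ h1
    have hexp : ‖ξ‖ ^ (-((N : ℝ) + 2 * β))
        = r ^ ((-(thetaV α β)) * (-((N : ℝ) + 2 * β))) * ‖z‖ ^ (-((N : ℝ) + 2 * β)) := by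
      rw [hξn, Real.mul_rpow hrθ.le (norm_nonneg z), ← Real.rpow_mul hr.le]
    have hzb : ‖z‖ ^ (-((N : ℝ) + 2 * β)) ≤ 1 :=
      Real.rpow_le_one_of_one_le_of_nonpos hz (by linarith)
    have hGb2 : G ξ ≤ C₁ * r ^ ((-(thetaV α β)) * (-((N : ℝ) + 2 * β))) := by
      calc G ξ ≤ C₁ * ‖ξ‖ ^ (-((N : ℝ) + 2 * β)) := hGb
        _ = C₁ * (r ^ ((-(thetaV α β)) * (-((N : ℝ) + 2 * β))) * ‖z‖ ^ (-((N : ℝ) + 2 * β))) := by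
            rw [hexp]
        _ ≤ C₁ * (r ^ ((-(thetaV α β)) * (-((N : ℝ) + 2 * β))) * 1) := by
            refine mul_le_mul_of_nonneg_left ?_ hC₁.le
            exact mul_le_mul_of_nonneg_left hzb (Real.rpow_pos_of_pos hr _).le
        _ = C₁ * r ^ ((-(thetaV α β)) * (-((N : ℝ) + 2 * β))) := by ring
    have key : r ^ (-(sigmaStar N α β)) * G ξ ≤ C₁ * r ^ (2 * α - 1) := by
      have h2 := mul_le_mul_of_nonneg_left hGb2 (Real.rpow_pos_of_pos hr (-(sigmaStar N α β))).le
      have h2β : (2:ℝ) * β ≠ 0 := by positivity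
      calc r ^ (-(sigmaStar N α β)) * G ξ
          ≤ r ^ (-(sigmaStar N α β)) * (C₁ * r ^ ((-(thetaV α β)) * (-((N : ℝ) + 2 * β)))) := h2
        _ = C₁ * (r ^ (-(sigmaStar N α β)) * r ^ ((-(thetaV α β)) * (-((N : ℝ) + 2 * β)))) := by
            ring
        _ = C₁ * r ^ (-(sigmaStar N α β) + (-(thetaV α β)) * (-((N : ℝ) + 2 * β))) := by
            rw [← Real.rpow_add hr]
        _ = C₁ * r ^ (2 * α - 1) := by
            rw [show -(sigmaStar N α β) + (-(thetaV α β)) * (-((N : ℝ) + 2 * β)) = 2 * α - 1 by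
              unfold sigmaStar thetaV; field_simp; ring]
    rw [hkY]; linarith
  · have hξ1 : ‖ξ‖ ≤ 1 := h1.le
    have hξpos : 0 < ‖ξ‖ := norm_pos_iff.mpr hξ0
    have hr1 : 1 ≤ r := by
      by_contra hcon
      push_neg at hcon
      have h2 : 1 < r ^ (-(thetaV α β)) := by
        rw [Real.one_lt_rpow_iff_of_pos hr]
        exact Or.inr ⟨hcon, by linarith⟩
      have h3 : 1 < ‖ξ‖ := by rw [hξn]; nlinarith
      linarith
    have hlogξ : |Real.log ‖ξ‖| ≤ thetaV α β * Real.log t := by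
      have hle0 : Real.log ‖ξ‖ ≤ 0 := Real.log_nonpos hξpos.le hξ1
      rw [abs_of_nonpos hle0]
      have heq : Real.log ‖ξ‖ = -(thetaV α β) * Real.log r + Real.log ‖z‖ := by
        rw [hξn, Real.log_mul (ne_of_gt hrθ) (by linarith : ‖z‖ ≠ 0), Real.log_rpow hr]
      rw [heq]
      have hlz : 0 ≤ Real.log ‖z‖ := Real.log_nonneg hz
      have hlr : Real.log r ≤ Real.log t := Real.log_le_log hr hrt
      nlinarith [hθ.le]
    have hGb := hGlog ξ hξ0 hξ1
    have hσpos : 0 < sigmaStar N α β := by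
      have hNθ : 0 ≤ (N : ℝ) * thetaV α β := by positivity
      unfold sigmaStar at *; linarith
    have hrσ : r ^ (-(sigmaStar N α β)) ≤ 1 :=
      Real.rpow_le_one_of_one_le_of_nonpos hr1 (by linarith)
    have hGpos' := hGpos ξ hξ0
    rw [hkY]
    have h5 : r ^ (-(sigmaStar N α β)) * G ξ ≤ G ξ := by nlinarith
    have h6 : G ξ ≤ C₁ * (1 + thetaV α β * Real.log t) := by
      refine hGb.trans ?_
      refine mul_le_mul_of_nonneg_left ?_ hC₁.le
      linarith
    have hpos1 : 0 ≤ C₁ * r ^ (2 * α - 1) := by positivity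
    linarith


lemma core_lower
    (hN : 1 ≤ N) (α β : ℝ) (hα0 : 0 < α) (hα1 : α < 1) (hβ0 : 0 < β)
    {G : Euc N → ℝ} {C₁ : ℝ} (hC₁ : 0 < C₁)
    (hGcont : ContinuousOn G {(0 : Euc N)}ᶜ)
    (hGpos : ∀ ξ : Euc N, ξ ≠ 0 → 0 < G ξ)
    (hGout : ∀ ξ : Euc N, 1 ≤ ‖ξ‖ → G ξ ≤ C₁ * ‖ξ‖ ^ (-((N : ℝ) + 2 * β)))
    (hGlog : ∀ ξ : Euc N, ξ ≠ 0 → ‖ξ‖ ≤ 1 → G ξ ≤ C₁ * (1 + |Real.log ‖ξ‖|))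
    (γ : ℝ) (g : ℝ → ℝ) (ν μ : ℝ)
    (K : ℝ → ℝ) (T₁ : ℝ) (hT₁2 : 2 ≤ T₁)
    (hKpos : ∀ t, T₁ ≤ t → 0 < K t)
    (hg2 : ∀ t, T₁ ≤ t → 2 ≤ ν * g t)
    (hK : ∀ t, T₁ ≤ t → ∀ z : Euc N, 1 ≤ ‖z‖ → ‖z‖ ≤ μ * g t + 1 →
      ∀ r : ℝ, t / 2 ≤ r → r ≤ t → K t ≤ G ((r ^ (-(thetaV α β))) • z)) :
    ∀ t, T₁ ≤ t → ∀ x : Euc N, ν * g t < ‖x‖ → ‖x‖ < μ * g t →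
      (volume (Metric.ball (0 : Euc N) 1)).toReal * K t * t ^ (-(sigmaStar N α β)) *
          (∫ s in Ioo (0 : ℝ) (t / 2), (1 + s) ^ (-γ))
        ≤ mildSol N α β G
            (fun (y : Euc N) (s : ℝ) =>
              Set.indicator (Metric.ball (0 : Euc N) 1) (fun _ => (1 + s) ^ (-γ)) y) x t := by
  intro t ht x hx1 hx2
  have ht2 : (2:ℝ) ≤ t := le_trans hT₁2 ht
  have ht0 : (0:ℝ) < t := by linarith
  have ht1 : (1:ℝ) ≤ t := by linarith
  have hθ : 0 < thetaV α β := div_pos hα0 (by linarith)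
  have hσpos : 0 < sigmaStar N α β := by
    have hNθ : 0 ≤ (N : ℝ) * thetaV α β := by positivity
    unfold sigmaStar at *; linarith
  set B := Metric.ball (0 : Euc N) 1 with hBdef
  set H : ℝ × Euc N → ℝ := fun q =>
    kernelY N α β G (x - q.2) (t - q.1) * Set.indicator B (fun _ => (1 + q.1) ^ (-γ)) q.2
    with hHdef
  have measH' : Measurable H := measH hGcont α β x t γ
  have hz1 : ∀ y ∈ B, 1 ≤ ‖x - y‖ := by
    intro y hy
    have hy1 : ‖y‖ < 1 := mem_ball_zero_iff.mp hy
    have h3 := norm_sub_norm_le x y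
    have h2 := hg2 t ht
    linarith
  have hz2 : ∀ y ∈ B, ‖x - y‖ ≤ μ * g t + 1 := by
    intro y hy
    have hy1 : ‖y‖ < 1 := mem_ball_zero_iff.mp hy
    have h3 := norm_sub_le x y
    linarith
  have Hnonneg : ∀ s ∈ Ioo (0:ℝ) t, ∀ y : Euc N, 0 ≤ H (s, y) := by
    intro s hs y
    by_cases hy : y ∈ B
    · have hzz := hz1 y hy
      have hz0 : x - y ≠ 0 := by
        intro h; rw [h, norm_zero] at hzz; linarith
      have hr : 0 < t - s := by linarith [hs.2]
      have hξ0 : ((t - s) ^ (-(thetaV α β))) • (x - y) ≠ 0 :=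
        smul_ne_zero (ne_of_gt (Real.rpow_pos_of_pos hr _)) hz0
      have hY : 0 < kernelY N α β G (x - y) (t - s) :=
        mul_pos (Real.rpow_pos_of_pos hr _) (hGpos _ hξ0)
      have hs1 : (0:ℝ) < 1 + s := by linarith [hs.1]
      have hf : 0 ≤ Set.indicator B (fun _ => (1 + s) ^ (-γ)) y := by
        rw [Set.indicator_of_mem hy]; positivity
      exact mul_nonneg hY.le hf
    · simp [hHdef, Set.indicator_of_notMem hy]
  set Cγ : ℝ := max 1 ((1 + t) ^ (-γ)) with hCγ
  have hCγpos : (0:ℝ) < Cγ := lt_of_lt_of_le one_pos (le_max_left _ _)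
  have hpow_le : ∀ s ∈ Ioo (0:ℝ) t, (1 + s) ^ (-γ) ≤ Cγ := by
    intro s hs
    rcases le_or_gt 0 γ with hγ | hγ
    · refine le_trans ?_ (le_max_left _ _)
      exact Real.rpow_le_one_of_one_le_of_nonpos (by linarith [hs.1]) (by linarith)
    · refine le_trans ?_ (le_max_right _ _)
      exact Real.rpow_le_rpow (by linarith [hs.1]) (by linarith [hs.2]) (by linarith)
  set M : ℝ → ℝ := fun s => (C₁ * (t - s) ^ (2 * α - 1) + C₁ * (1 + thetaV α β * Real.log t)) * Cγ
    with hMdef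
  have hHM : ∀ s ∈ Ioo (0:ℝ) t, ∀ y : Euc N,
      ‖H (s, y)‖ ≤ M s * Set.indicator B (fun _ => (1:ℝ)) y := by
    intro s hs y
    by_cases hy : y ∈ B
    · rw [Real.norm_eq_abs, abs_of_nonneg (Hnonneg s hs y)]
      have hYb := kernelY_upper α β hα0 hα1 hβ0 hC₁ hGpos hGout hGlog ht1 (hz1 y hy)
        (show (0:ℝ) < t - s by linarith [hs.2]) (show t - s ≤ t by linarith [hs.1])
      have hfb : Set.indicator B (fun _ => (1 + s) ^ (-γ)) y ≤ Cγ := by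
        rw [Set.indicator_of_mem hy]; exact hpow_le s hs
      have hs1 : (0:ℝ) < 1 + s := by linarith [hs.1]
      have hf0 : 0 ≤ Set.indicator B (fun _ => (1 + s) ^ (-γ)) y := by
        rw [Set.indicator_of_mem hy]; positivity
      have hybound : M s * Set.indicator B (fun _ => (1:ℝ)) y = M s := by
        rw [Set.indicator_of_mem hy]; ring
      rw [hybound, hMdef]
      have hb0 : 0 ≤ C₁ * (t - s) ^ (2 * α - 1) + C₁ * (1 + thetaV α β * Real.log t) := by
        have hr : (0:ℝ) < t - s := by linarith [hs.2]
        have hlt : 0 ≤ Real.log t := Real.log_nonneg ht1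
        have hθ' := hθ.le
        positivity
      exact mul_le_mul hYb hfb hf0 hb0
    · simp [hHdef, Set.indicator_of_notMem hy]
  have hIntM : IntegrableOn M (Ioo (0:ℝ) t) := by
    have h1 : IntervalIntegrable (fun s : ℝ => s ^ (2 * α - 1)) volume 0 t :=
      intervalIntegral.intervalIntegrable_rpow' (by linarith)
    have h2 := h1.comp_sub_left t
    simp only [sub_zero, sub_self] at h2
    have h2' := h2.symm
    rw [intervalIntegrable_iff_integrableOn_Ioo_of_le (le_of_lt ht0)] at h2'
    exact ((h2'.const_mul C₁).add
      ((integrableOn_const_iff).mpr (Or.inr measure_Ioo_lt_top))).mul_const Cγ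
  have hIndInt : Integrable (Set.indicator B fun _ => (1:ℝ)) (volume : Measure (Euc N)) := by
    rw [integrable_indicator_iff measurableSet_ball]
    exact (integrableOn_const_iff).mpr (Or.inr measure_ball_lt_top)
  have prodmeas : (volume.restrict (Ioo (0:ℝ) t)).prod (volume : Measure (Euc N))
      = ((volume : Measure ℝ).prod volume).restrict ((Ioo (0:ℝ) t) ×ˢ (univ : Set (Euc N))) := by
    rw [← Measure.prod_restrict, Measure.restrict_univ]
  have hIntH : Integrable H ((volume.restrict (Ioo (0:ℝ) t)).prod volume) := by
    have hmaj : Integrable (fun q : ℝ × Euc N => M q.1 * Set.indicator B (fun _ => (1:ℝ)) q.2)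
        ((volume.restrict (Ioo (0:ℝ) t)).prod volume) := hIntM.mul_prod hIndInt
    refine hmaj.mono' measH'.aestronglyMeasurable ?_
    rw [prodmeas]
    refine ae_restrict_of_forall_mem (measurableSet_Ioo.prod MeasurableSet.univ) ?_
    rintro ⟨s, y⟩ ⟨hs, -⟩
    exact hHM s hs y
  set F : ℝ → ℝ := fun s => ∫ y, H (s, y) with hFdef
  have hIntF : Integrable F (volume.restrict (Ioo (0:ℝ) t)) := hIntH.integral_prod_left
  set vB : ℝ := (volume B).toReal with hvBdef
  have hvB : 0 < vB :=
    ENNReal.toReal_pos (Metric.measure_ball_pos volume 0 one_pos).ne' measure_ball_lt_top.ne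
  have hKt := hKpos t ht
  set A : ℝ := vB * K t * t ^ (-(sigmaStar N α β)) with hAdef
  have hA : 0 < A := by
    have := Real.rpow_pos_of_pos ht0 (-(sigmaStar N α β))
    positivity
  set Lo : ℝ → ℝ := Set.indicator (Ioo (0:ℝ) (t/2)) (fun s => A * (1 + s) ^ (-γ)) with hLodef
  have hLo0 : ∀ s, 0 ≤ Lo s := by
    intro s
    by_cases hs : s ∈ Ioo (0:ℝ) (t/2)
    · rw [hLodef, Set.indicator_of_mem hs]
      have : (0:ℝ) < 1 + s := by linarith [hs.1]
      positivity
    · rw [hLodef, Set.indicator_of_notMem hs]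
  have hLoF : ∀ s ∈ Ioo (0:ℝ) t, Lo s ≤ F s := by
    intro s hs
    by_cases hmem : s ∈ Ioo (0:ℝ) (t/2)
    · rw [hLodef, Set.indicator_of_mem hmem]
      have hr1 : t / 2 ≤ t - s := by linarith [hmem.2]
      have hr2 : t - s ≤ t := by linarith [hmem.1]
      have hrpos : 0 < t - s := by linarith
      have hs1 : (0:ℝ) < 1 + s := by linarith [hmem.1]
      have hlow : ∀ y : Euc N,
          Set.indicator B (fun _ => K t * t ^ (-(sigmaStar N α β)) * (1 + s) ^ (-γ)) y
            ≤ H (s, y) := by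
        intro y
        by_cases hy : y ∈ B
        · rw [Set.indicator_of_mem hy]
          have hHy : H (s, y) = kernelY N α β G (x - y) (t - s) * (1 + s) ^ (-γ) := by
            rw [hHdef]; simp only [Set.indicator_of_mem hy]
          rw [hHy]
          have hGb := hK t ht (x - y) (hz1 y hy) (hz2 y hy) (t - s) hr1 hr2
          have htσ : t ^ (-(sigmaStar N α β)) ≤ (t - s) ^ (-(sigmaStar N α β)) :=
            Real.rpow_le_rpow_of_nonpos hrpos hr2 (by linarith)
          have h1 : K t * t ^ (-(sigmaStar N α β))
              ≤ (t - s) ^ (-(sigmaStar N α β)) *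
                G (((t - s) ^ (-(thetaV α β))) • (x - y)) := by
            calc K t * t ^ (-(sigmaStar N α β))
                ≤ K t * (t - s) ^ (-(sigmaStar N α β)) :=
                  mul_le_mul_of_nonneg_left htσ hKt.le
              _ ≤ G (((t - s) ^ (-(thetaV α β))) • (x - y)) * (t - s) ^ (-(sigmaStar N α β)) :=
                  mul_le_mul_of_nonneg_right hGb (Real.rpow_pos_of_pos hrpos _).le
              _ = (t - s) ^ (-(sigmaStar N α β)) *
                  G (((t - s) ^ (-(thetaV α β))) • (x - y)) := mul_comm _ _
          exact mul_le_mul_of_nonneg_right h1 (Real.rpow_pos_of_pos hs1 _).le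
        · rw [Set.indicator_of_notMem hy]
          exact Hnonneg s hs y
      have hsecInt : Integrable (fun y => H (s, y)) (volume : Measure (Euc N)) := by
        refine Integrable.mono' (hIndInt.const_mul (M s))
          ((measH'.comp (measurable_prodMk_left)).aestronglyMeasurable) ?_
        exact Filter.Eventually.of_forall fun y => hHM s hs y
      have hmono := integral_mono_of_nonneg
        (Filter.Eventually.of_forall (Set.indicator_nonneg
          (fun y _ => by positivity)))
        hsecInt (Filter.Eventually.of_forall hlow)
      rw [integral_indicator_const _ measurableSet_ball] at hmono
      calc A * (1 + s) ^ (-γ)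
          = (volume B).toReal • (K t * t ^ (-(sigmaStar N α β)) * (1 + s) ^ (-γ)) := by
            rw [smul_eq_mul, hAdef, hvBdef]; ring
        _ ≤ F s := hmono
    · rw [hLodef, Set.indicator_of_notMem hmem]
      exact integral_nonneg (fun y => Hnonneg s hs y)
  have hfinal : ∫ s in Ioo (0:ℝ) t, Lo s ≤ ∫ s in Ioo (0:ℝ) t, F s := by
    refine integral_mono_of_nonneg (Filter.Eventually.of_forall fun s => hLo0 s) hIntF ?_
    exact ae_restrict_of_forall_mem measurableSet_Ioo hLoF
  have hcomp : ∫ s in Ioo (0:ℝ) t, Lo s = A * ∫ s in Ioo (0:ℝ) (t/2), (1 + s) ^ (-γ) := by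
    rw [hLodef, integral_indicator measurableSet_Ioo,
      Measure.restrict_restrict measurableSet_Ioo,
      Set.inter_eq_self_of_subset_left (Ioo_subset_Ioo le_rfl (by linarith))]
    exact integral_const_mul A _
  have hms : mildSol N α β G
      (fun (y : Euc N) (s : ℝ) =>
        Set.indicator (Metric.ball (0 : Euc N) 1) (fun _ => (1 + s) ^ (-γ)) y) x t
      = ∫ s in Ioo (0:ℝ) t, F s := rfl
  rw [hms, ← hcomp]
  exact hfinal

lemma eLpNorm_stage (hN : 1 ≤ N) (p : ℝ≥0∞) (hp : 1 ≤ p)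
    (u : Euc N → ℝ) (a b A : ℝ) (ha : 0 < a) (hab : a < b) (hA : 0 ≤ A)
    (hu : ∀ x : Euc N, a < ‖x‖ → ‖x‖ < b → A ≤ u x) :
    ENNReal.ofReal
        (A * ((b ^ N - a ^ N) * (volume (Metric.ball (0 : Euc N) 1)).toReal) ^ (1 / p.toReal))
      ≤ eLpNorm u p (volume.restrict {x : Euc N | a < ‖x‖ ∧ ‖x‖ < b}) := by
  haveI : Nonempty (Fin N) := ⟨⟨0, hN⟩⟩
  haveI : Nontrivial (Euc N) := inferInstance
  set S := {x : Euc N | a < ‖x‖ ∧ ‖x‖ < b} with hS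
  have hSopen : IsOpen S := by
    rw [hS, Set.setOf_and]
    exact (isOpen_lt continuous_const continuous_norm).inter
      (isOpen_lt continuous_norm continuous_const)
  have hSmeas : MeasurableSet S := hSopen.measurableSet
  set vB : ℝ := (volume (Metric.ball (0 : Euc N) 1)).toReal with hvBdef
  have hvB : 0 < vB :=
    ENNReal.toReal_pos (Metric.measure_ball_pos volume 0 one_pos).ne' measure_ball_lt_top.ne
  have hab' : a ^ N < b ^ N := pow_lt_pow_left₀ hab ha.le (by omega)
  have hW : 0 < (b ^ N - a ^ N) * vB := by nlinarith
  have hSvol : volume S = ENNReal.ofReal ((b ^ N - a ^ N) * vB) := by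
    have hSeq : S = Metric.ball (0 : Euc N) b \ Metric.closedBall 0 a := by
      ext x
      simp only [hS, Set.mem_setOf_eq, Set.mem_diff, Metric.mem_ball, Metric.mem_closedBall,
        dist_zero_right, not_le]
      tauto
    rw [hSeq, measure_diff (Metric.closedBall_subset_ball hab)
      measurableSet_closedBall.nullMeasurableSet measure_closedBall_lt_top.ne,
      Measure.addHaar_ball (μ := (volume : Measure (Euc N))) 0 (ha.trans hab).le, Measure.addHaar_closedBall (μ := (volume : Measure (Euc N))) 0 ha.le,
      finrank_euclideanSpace_fin]
    rw [← ENNReal.sub_mul (fun _ _ => measure_ball_lt_top.ne),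
      ← ENNReal.ofReal_sub _ (pow_nonneg ha.le N)]
    rw [show (volume (Metric.ball (0:Euc N) 1)) = ENNReal.ofReal vB from
      (ENNReal.ofReal_toReal measure_ball_lt_top.ne).symm]
    rw [← ENNReal.ofReal_mul (by nlinarith : (0:ℝ) ≤ b ^ N - a ^ N)]
  have hvol0 : volume S ≠ 0 := by
    rw [hSvol]
    exact (ENNReal.ofReal_pos.mpr hW).ne'
  have hμ0 : volume.restrict S ≠ 0 := by
    rw [Ne, Measure.restrict_eq_zero]; exact hvol0
  have hp0 : p ≠ 0 := (lt_of_lt_of_le zero_lt_one hp).ne'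
  have hconst := eLpNorm_const (μ := volume.restrict S) (A : ℝ) hp0 hμ0
  have hmono : eLpNorm (fun _ : Euc N => A) p (volume.restrict S)
      ≤ eLpNorm u p (volume.restrict S) := by
    apply eLpNorm_mono_ae
    refine ae_restrict_of_forall_mem hSmeas ?_
    intro x hx
    have h1 := hu x hx.1 hx.2
    rw [Real.norm_eq_abs, Real.norm_eq_abs, abs_of_nonneg hA]
    exact le_trans h1 (le_abs_self _)
  calc ENNReal.ofReal (A * ((b ^ N - a ^ N) * vB) ^ (1 / p.toReal))
      = ENNReal.ofReal A * ENNReal.ofReal (((b ^ N - a ^ N) * vB) ^ (1 / p.toReal)) :=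
        ENNReal.ofReal_mul hA
    _ = ENNReal.ofReal A * ENNReal.ofReal ((b ^ N - a ^ N) * vB) ^ (1 / p.toReal) := by
        rw [ENNReal.ofReal_rpow_of_pos hW]
    _ = ‖A‖ₑ * (volume.restrict S Set.univ) ^ (1 / p.toReal) := by
        rw [Real.enorm_eq_ofReal hA, Measure.restrict_apply_univ, hSvol]
    _ = eLpNorm (fun _ : Euc N => A) p (volume.restrict S) := hconst.symm
    _ ≤ eLpNorm u p (volume.restrict S) := hmono

lemma Ibound (γ : ℝ) : ∃ cI TI : ℝ, 0 < cI ∧ 2 ≤ TI ∧ ∀ t : ℝ, TI ≤ t →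
    ((γ < 1 → cI * t ^ (1 - γ) ≤ ∫ s in Ioo (0:ℝ) (t/2), (1 + s) ^ (-γ)) ∧
     (γ = 1 → cI * Real.log t ≤ ∫ s in Ioo (0:ℝ) (t/2), (1 + s) ^ (-γ)) ∧
     (1 < γ → cI ≤ ∫ s in Ioo (0:ℝ) (t/2), (1 + s) ^ (-γ))) := by
  have hIval : ∀ t : ℝ, 2 ≤ t →
      ∫ s in Ioo (0:ℝ) (t/2), (1 + s) ^ (-γ) = ∫ u in (1:ℝ)..(1 + t/2), u ^ (-γ) := by
    intro t ht
    rw [← integral_Ioc_eq_integral_Ioo,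
      ← intervalIntegral.integral_of_le (by linarith : (0:ℝ) ≤ t/2)]
    rw [show (fun s : ℝ => (1 + s) ^ (-γ)) = fun s : ℝ => (fun u : ℝ => u ^ (-γ)) (1 + s)
      from rfl]
    rw [intervalIntegral.integral_comp_add_left (fun u : ℝ => u ^ (-γ)) 1]
    norm_num
  rcases lt_trichotomy γ 1 with hγ | hγ | hγ
  · -- γ < 1
    have htend : Filter.Tendsto (fun t : ℝ => (t/2) ^ (1 - γ)) Filter.atTop Filter.atTop :=
      (tendsto_rpow_atTop (by linarith)).comp (Filter.tendsto_id.atTop_div_const two_pos)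
    obtain ⟨T₀, hT₀⟩ := Filter.eventually_atTop.mp (htend.eventually_ge_atTop 2)
    have h1γ : (0:ℝ) < 1 - γ := by linarith
    refine ⟨2 ^ (γ - 1) / (2 * (1 - γ)), max T₀ 2, by positivity, le_max_right _ _, ?_⟩
    intro t ht
    have ht2 : (2:ℝ) ≤ t := le_trans (le_max_right _ _) ht
    have ht0 : (0:ℝ) < t := by linarith
    refine ⟨fun _ => ?_, fun h => absurd h (ne_of_lt hγ), fun h => absurd h (by linarith)⟩
    have hval : ∫ s in Ioo (0:ℝ) (t/2), (1 + s) ^ (-γ)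
        = ((1 + t/2) ^ (1 - γ) - 1) / (1 - γ) := by
      rw [hIval t ht2, integral_rpow (Or.inl (by linarith : (-1:ℝ) < -γ)), Real.one_rpow,
        show -γ + 1 = 1 - γ from by ring]
    have h2 : (2:ℝ) ≤ (t/2) ^ (1 - γ) := hT₀ t (le_trans (le_max_left _ _) ht)
    have h3 : (t/2) ^ (1 - γ) ≤ (1 + t/2) ^ (1 - γ) :=
      Real.rpow_le_rpow (by linarith) (by linarith) (by linarith)
    have h4 : (t/2) ^ (1 - γ) = t ^ (1 - γ) * 2 ^ (γ - 1) := by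
      rw [Real.div_rpow (by linarith) (by norm_num), div_eq_mul_inv,
        ← Real.rpow_neg (by norm_num : (0:ℝ) ≤ 2), neg_sub]
    have h5 : (1/2) * (t/2) ^ (1 - γ) ≤ (1 + t/2) ^ (1 - γ) - 1 := by linarith
    rw [hval]
    have hne : (1:ℝ) - γ ≠ 0 := ne_of_gt h1γ
    calc 2 ^ (γ - 1) / (2 * (1 - γ)) * t ^ (1 - γ)
        = ((1/2) * (t/2) ^ (1 - γ)) / (1 - γ) := by rw [h4]; field_simp
      _ ≤ ((1 + t/2) ^ (1 - γ) - 1) / (1 - γ) := by gcongr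
  · -- γ = 1
    subst hγ
    refine ⟨1/2, 4, by norm_num, by norm_num, ?_⟩
    intro t ht
    have ht0 : (0:ℝ) < t := by linarith
    refine ⟨fun h => absurd rfl (ne_of_gt h), fun _ => ?_, fun h => absurd rfl (ne_of_gt h)⟩
    have hval : ∫ s in Ioo (0:ℝ) (t/2), (1 + s) ^ (-(1:ℝ)) = Real.log (1 + t/2) := by
      rw [hIval t (by linarith)]
      rw [show (fun u : ℝ => u ^ (-(1:ℝ))) = fun u : ℝ => u⁻¹ by
        funext u; rw [Real.rpow_neg_one]]
      rw [integral_inv (by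
        rw [Set.uIcc_of_le (by linarith : (1:ℝ) ≤ 1 + t/2)]
        intro hmem
        exact absurd hmem.1 (by norm_num))]
      rw [div_one]
    rw [hval]
    have hlog4 : Real.log 4 ≤ Real.log t := Real.log_le_log (by norm_num) ht
    have h4 : Real.log 4 = 2 * Real.log 2 := by
      rw [show (4:ℝ) = 2 ^ (2:ℕ) by norm_num, Real.log_pow]; norm_num
    have hmono : Real.log (t/2) ≤ Real.log (1 + t/2) :=
      Real.log_le_log (by linarith) (by linarith)
    have hdiv : Real.log (t/2) = Real.log t - Real.log 2 :=
      Real.log_div (by linarith) (by norm_num)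
    linarith
  · -- γ > 1
    refine ⟨(1 - 2 ^ (1 - γ)) / (γ - 1), 2, ?_, le_refl _, ?_⟩
    · have h1 : (2:ℝ) ^ (1 - γ) < 1 :=
        Real.rpow_lt_one_of_one_lt_of_neg (by norm_num) (by linarith)
      exact div_pos (by linarith) (by linarith)
    intro t ht
    refine ⟨fun h => absurd h (by linarith), fun h => absurd h (by linarith), fun _ => ?_⟩
    have hval : ∫ s in Ioo (0:ℝ) (t/2), (1 + s) ^ (-γ)
        = ((1 + t/2) ^ (1 - γ) - 1) / (1 - γ) := by
      rw [hIval t ht, integral_rpow (Or.inr ⟨fun h => hγ.ne' (neg_injective h),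
        by
          rw [Set.uIcc_of_le (by linarith : (1:ℝ) ≤ 1 + t/2)]
          intro hmem
          exact absurd hmem.1 (by norm_num)⟩), Real.one_rpow,
        show -γ + 1 = 1 - γ from by ring]
    rw [hval]
    have hb : (1 + t/2) ^ (1 - γ) ≤ 2 ^ (1 - γ) :=
      Real.rpow_le_rpow_of_nonpos two_pos (by linarith) (by linarith)
    have heq : ((1 + t/2) ^ (1 - γ) - 1) / (1 - γ) = (1 - (1 + t/2) ^ (1 - γ)) / (γ - 1) := by
      rw [div_eq_div_iff (by linarith) (by linarith)]; ring
    rw [heq]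
    gcongr

set_option maxHeartbeats 2000000 in
theorem intermediate_lower_optimal
    (N : ℕ) (hN : 1 ≤ N) (α β : ℝ) (hα0 : 0 < α) (hα1 : α < 1)
    (hβ0 : 0 < β) (hβ1 : β ≤ 1) (hNβ : (N : ℝ) ≤ 4 * β)
    (G : Euc N → ℝ) (C₁ : ℝ) (hC₁ : 0 < C₁)
    (hGcont : ContinuousOn G {(0 : Euc N)}ᶜ)
    (hGpos : ∀ ξ : Euc N, ξ ≠ 0 → 0 < G ξ)
    (hGin₁ : (N : ℝ) < 4 * β → ∀ ξ : Euc N, ξ ≠ 0 → ‖ξ‖ ≤ 1 → G ξ ≤ C₁)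
    (hGin₂ : (N : ℝ) = 4 * β → ∀ ξ : Euc N, ξ ≠ 0 → ‖ξ‖ ≤ 1 →
      G ξ ≤ C₁ * (1 + |Real.log ‖ξ‖|))
    (hGout : ∀ ξ : Euc N, 1 ≤ ‖ξ‖ → G ξ ≤ C₁ * ‖ξ‖ ^ (-((N : ℝ) + 2 * β)))
    (c₁ : ℝ) (hc₁ : 0 < c₁)
    (hGlow₁ : (N : ℝ) < 4 * β → ∀ ξ : Euc N, ξ ≠ 0 → ‖ξ‖ ≤ 1 → c₁ ≤ G ξ)
    (hGlow₂ : (N : ℝ) = 4 * β → ∀ ξ : Euc N, ξ ≠ 0 → ‖ξ‖ ≤ 1 →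
      c₁ * (1 + |Real.log ‖ξ‖|) ≤ G ξ)
    (γ : ℝ)
    (p : ℝ≥0∞) (hp1 : 1 ≤ p)
    (g : ℝ → ℝ) (hgm : Measurable g) (hgpos : ∀ t : ℝ, 0 < t → 0 < g t)
    (hgtop : Filter.Tendsto g Filter.atTop Filter.atTop)
    (hgo : Filter.Tendsto (fun t => g t / t ^ thetaV α β) Filter.atTop (nhds 0)) :
    ∀ ν μ : ℝ, 0 < ν → ν < μ → ∃ c T : ℝ, 0 < c ∧ 2 ≤ T ∧ ∀ t : ℝ, T ≤ t →
      ((N : ℝ) < 4 * β →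
        (γ < 1 → ENNReal.ofReal (c * g t ^ ((N : ℝ) / p.toReal) * (t ^ (-sigmaStar N α β + 1 - γ))) ≤ eLpNorm (fun x => mildSol N α β G (fun (y : Euc N) (s : ℝ) => Set.indicator (Metric.ball (0 : Euc N) 1) (fun _ => (1 + s) ^ (-γ)) y) x t) p
          (volume.restrict {x : Euc N | ν * g t < ‖x‖ ∧ ‖x‖ < μ * g t})) ∧
        (γ = 1 → ENNReal.ofReal (c * g t ^ ((N : ℝ) / p.toReal) * (t ^ (-sigmaStar N α β) * Real.log t)) ≤ eLpNorm (fun x => mildSol N α β G (fun (y : Euc N) (s : ℝ) => Set.indicator (Metric.ball (0 : Euc N) 1) (fun _ => (1 + s) ^ (-γ)) y) x t) p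
          (volume.restrict {x : Euc N | ν * g t < ‖x‖ ∧ ‖x‖ < μ * g t})) ∧
        (1 < γ → ENNReal.ofReal (c * g t ^ ((N : ℝ) / p.toReal) * (t ^ (-sigmaStar N α β))) ≤ eLpNorm (fun x => mildSol N α β G (fun (y : Euc N) (s : ℝ) => Set.indicator (Metric.ball (0 : Euc N) 1) (fun _ => (1 + s) ^ (-γ)) y) x t) p
          (volume.restrict {x : Euc N | ν * g t < ‖x‖ ∧ ‖x‖ < μ * g t}))) ∧
      ((N : ℝ) = 4 * β →
        (γ < 1 → ENNReal.ofReal (c * g t ^ ((N : ℝ) / p.toReal) * (Real.log (t ^ thetaV α β / g t) * (t ^ (-sigmaStar N α β + 1 - γ)))) ≤ eLpNorm (fun x => mildSol N α β G (fun (y : Euc N) (s : ℝ) => Set.indicator (Metric.ball (0 : Euc N) 1) (fun _ => (1 + s) ^ (-γ)) y) x t) p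
          (volume.restrict {x : Euc N | ν * g t < ‖x‖ ∧ ‖x‖ < μ * g t})) ∧
        (γ = 1 → ENNReal.ofReal (c * g t ^ ((N : ℝ) / p.toReal) * (Real.log (t ^ thetaV α β / g t) * (t ^ (-sigmaStar N α β) * Real.log t))) ≤ eLpNorm (fun x => mildSol N α β G (fun (y : Euc N) (s : ℝ) => Set.indicator (Metric.ball (0 : Euc N) 1) (fun _ => (1 + s) ^ (-γ)) y) x t) p
          (volume.restrict {x : Euc N | ν * g t < ‖x‖ ∧ ‖x‖ < μ * g t})) ∧
        (1 < γ → ENNReal.ofReal (c * g t ^ ((N : ℝ) / p.toReal) * (Real.log (t ^ thetaV α β / g t) * (t ^ (-sigmaStar N α β)))) ≤ eLpNorm (fun x => mildSol N α β G (fun (y : Euc N) (s : ℝ) => Set.indicator (Metric.ball (0 : Euc N) 1) (fun _ => (1 + s) ^ (-γ)) y) x t) p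
          (volume.restrict {x : Euc N | ν * g t < ‖x‖ ∧ ‖x‖ < μ * g t}))) := by
  
  intro ν μ hν hνμ
  have hθ : 0 < thetaV α β := div_pos hα0 (by linarith)
  have hGlog : ∀ ξ : Euc N, ξ ≠ 0 → ‖ξ‖ ≤ 1 → G ξ ≤ C₁ * (1 + |Real.log ‖ξ‖|) := by
    rcases lt_or_eq_of_le hNβ with h4 | h4
    · intro ξ h0 h1'
      have h2 := hGin₁ h4 ξ h0 h1'
      nlinarith [abs_nonneg (Real.log ‖ξ‖)]
    · exact hGin₂ h4
  obtain ⟨cI, TI, hcI, hTI, hIb⟩ := Ibound γ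
  have hvB : 0 < (volume (Metric.ball (0 : Euc N) 1)).toReal :=
    ENNReal.toReal_pos (Metric.measure_ball_pos volume 0 one_pos).ne' measure_ball_lt_top.ne
  set vB : ℝ := (volume (Metric.ball (0 : Euc N) 1)).toReal with hvBdef
  set V : ℝ := (μ ^ N - ν ^ N) * vB with hVdef
  have hV : 0 < V := by
    have h1 : ν ^ N < μ ^ N := pow_lt_pow_left₀ hνμ hν.le (by omega)
    rw [hVdef]; nlinarith
  have hVp : 0 ≤ V ^ (1 / p.toReal) := Real.rpow_nonneg hV.le _
  have ev1 : ∀ᶠ t in Filter.atTop, 2 ≤ ν * g t :=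
    (hgtop.const_mul_atTop hν).eventually_ge_atTop 2
  have ev2 : ∀ᶠ t in Filter.atTop, (μ * g t + 1) * (t / 2) ^ (-(thetaV α β)) ≤ 1 := by
    have hh : Filter.Tendsto
        (fun t => (μ * (g t / t ^ thetaV α β) + t ^ (-(thetaV α β))) * 2 ^ (thetaV α β))
        Filter.atTop (nhds 0) := by
      have h2 := ((hgo.const_mul μ).add (tendsto_rpow_neg_atTop hθ)).mul_const
        ((2:ℝ) ^ (thetaV α β))
      simpa using h2
    have heq : ∀ᶠ t in Filter.atTop,
        (μ * (g t / t ^ thetaV α β) + t ^ (-(thetaV α β))) * 2 ^ (thetaV α β)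
          = (μ * g t + 1) * (t / 2) ^ (-(thetaV α β)) := by
      filter_upwards [Filter.eventually_gt_atTop 0] with t ht
      have htθ : 0 < t ^ thetaV α β := Real.rpow_pos_of_pos ht _
      have h2θ : (0:ℝ) < 2 ^ thetaV α β := Real.rpow_pos_of_pos two_pos _
      have e1 : (t / 2) ^ (-(thetaV α β)) = 2 ^ (thetaV α β) / t ^ (thetaV α β) := by
        rw [Real.rpow_neg (by linarith : (0:ℝ) ≤ t / 2),
          Real.div_rpow ht.le (by norm_num : (0:ℝ) ≤ 2), inv_div]
      rw [e1, Real.rpow_neg ht.le]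
      field_simp
    exact Filter.Tendsto.eventually_le_const (by norm_num : (0:ℝ) < 1) (hh.congr' heq)
  rcases lt_or_eq_of_le hNβ with h4 | h4
  · -- N < 4β
    obtain ⟨T₀, hT₀⟩ := Filter.eventually_atTop.mp (ev1.and ev2)
    set T₁ : ℝ := max T₀ 2 with hT₁def
    have hT₁2 : (2:ℝ) ≤ T₁ := le_max_right _ _
    have hg2 : ∀ t, T₁ ≤ t → 2 ≤ ν * g t := fun t ht =>
      (hT₀ t (le_trans (le_max_left _ _) ht)).1
    have hKcore : ∀ t, T₁ ≤ t → ∀ z : Euc N, 1 ≤ ‖z‖ → ‖z‖ ≤ μ * g t + 1 →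
        ∀ r : ℝ, t / 2 ≤ r → r ≤ t → c₁ ≤ G ((r ^ (-(thetaV α β))) • z) := by
      intro t ht z hz1 hz2 r hr1 hr2
      have ht2 : (2:ℝ) ≤ t := le_trans hT₁2 ht
      have hrpos : 0 < r := by linarith
      have hz0 : z ≠ 0 := fun h => by rw [h, norm_zero] at hz1; linarith
      have hξ0 : (r ^ (-(thetaV α β))) • z ≠ 0 :=
        smul_ne_zero (Real.rpow_pos_of_pos hrpos _).ne' hz0
      have hξ1 : ‖(r ^ (-(thetaV α β))) • z‖ ≤ 1 := by
        rw [norm_smul, Real.norm_eq_abs, abs_of_pos (Real.rpow_pos_of_pos hrpos _)]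
        have hmono : r ^ (-(thetaV α β)) ≤ (t / 2) ^ (-(thetaV α β)) :=
          Real.rpow_le_rpow_of_nonpos (by linarith) hr1 (by linarith)
        have h2 := (hT₀ t (le_trans (le_max_left _ _) ht)).2
        calc r ^ (-(thetaV α β)) * ‖z‖
            ≤ (t / 2) ^ (-(thetaV α β)) * ‖z‖ :=
              mul_le_mul_of_nonneg_right hmono (norm_nonneg z)
          _ ≤ (t / 2) ^ (-(thetaV α β)) * (μ * g t + 1) :=
              mul_le_mul_of_nonneg_left hz2 (Real.rpow_pos_of_pos (by linarith) _).le
          _ = (μ * g t + 1) * (t / 2) ^ (-(thetaV α β)) := mul_comm _ _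
          _ ≤ 1 := h2
      exact hGlow₁ h4 _ hξ0 hξ1
    have hcore := core_lower hN α β hα0 hα1 hβ0 hC₁ hGcont hGpos hGout hGlog γ g ν μ
      (fun _ => c₁) T₁ hT₁2 (fun _ _ => hc₁) hg2 hKcore
    refine ⟨vB * c₁ * cI * V ^ (1 / p.toReal), max T₁ TI,
      by positivity, le_trans hT₁2 (le_max_left _ _), ?_⟩
    intro t ht
    have htT₁ : T₁ ≤ t := le_trans (le_max_left _ _) ht
    have htTI : TI ≤ t := le_trans (le_max_right _ _) ht
    have ht2 : (2:ℝ) ≤ t := le_trans hT₁2 htT₁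
    have ht0 : (0:ℝ) < t := by linarith
    have hg0 : 0 < g t := hgpos t ht0
    have hgp : 0 ≤ g t ^ ((N:ℝ) / p.toReal) := Real.rpow_nonneg hg0.le _
    set I : ℝ := ∫ s in Ioo (0:ℝ) (t / 2), (1 + s) ^ (-γ) with hIdef
    have hI0 : 0 ≤ I := by
      rw [hIdef]
      apply setIntegral_nonneg measurableSet_Ioo
      intro s hs
      have : (0:ℝ) < 1 + s := by linarith [hs.1]
      positivity
    have htσ : 0 < t ^ (-(sigmaStar N α β)) := Real.rpow_pos_of_pos ht0 _
    set A : ℝ := vB * c₁ * t ^ (-(sigmaStar N α β)) * I with hAdef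
    have hA0 : 0 ≤ A := by positivity
    have hptw : ∀ x : Euc N, ν * g t < ‖x‖ → ‖x‖ < μ * g t →
        A ≤ mildSol N α β G (fun (y : Euc N) (s : ℝ) =>
          Set.indicator (Metric.ball (0 : Euc N) 1) (fun _ => (1 + s) ^ (-γ)) y) x t :=
      fun x h1 h2 => hcore t htT₁ x h1 h2
    have hstage := eLpNorm_stage hN p hp1
      (fun x => mildSol N α β G (fun (y : Euc N) (s : ℝ) =>
        Set.indicator (Metric.ball (0 : Euc N) 1) (fun _ => (1 + s) ^ (-γ)) y) x t)
      (ν * g t) (μ * g t) A (mul_pos hν hg0) (mul_lt_mul_of_pos_right hνμ hg0) hA0 hptw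
    rw [← hvBdef] at hstage
    have hWr : (((μ * g t) ^ N - (ν * g t) ^ N) * vB) ^ (1 / p.toReal)
        = V ^ (1 / p.toReal) * g t ^ ((N:ℝ) / p.toReal) := by
      have h1 : ((μ * g t) ^ N - (ν * g t) ^ N) * vB = V * g t ^ N := by rw [hVdef]; ring
      rw [h1, Real.mul_rpow hV.le (pow_nonneg hg0.le N), ← Real.rpow_natCast (g t) N,
        ← Real.rpow_mul hg0.le, mul_one_div]
    rw [hWr] at hstage
    have hnn : 0 ≤ vB * c₁ * t ^ (-(sigmaStar N α β)) *
        (V ^ (1 / p.toReal) * g t ^ ((N:ℝ) / p.toReal)) :=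
      mul_nonneg (mul_nonneg (mul_nonneg hvB.le hc₁.le) htσ.le) (mul_nonneg hVp hgp)
    refine ⟨fun _ => ⟨fun hγ' => ?_, fun hγ' => ?_, fun hγ' => ?_⟩,
      fun h4' => absurd h4' (ne_of_lt h4)⟩
    · refine le_trans (ENNReal.ofReal_le_ofReal ?_) hstage
      have hIl := (hIb t htTI).1 hγ'
      rw [show -sigmaStar N α β + 1 - γ = (-(sigmaStar N α β)) + (1 - γ) from by ring,
        Real.rpow_add ht0]
      calc vB * c₁ * cI * V ^ (1 / p.toReal) * g t ^ ((N:ℝ) / p.toReal) *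
            (t ^ (-(sigmaStar N α β)) * t ^ (1 - γ))
          = (vB * c₁ * t ^ (-(sigmaStar N α β)) *
              (V ^ (1 / p.toReal) * g t ^ ((N:ℝ) / p.toReal))) * (cI * t ^ (1 - γ)) := by ring
        _ ≤ (vB * c₁ * t ^ (-(sigmaStar N α β)) *
              (V ^ (1 / p.toReal) * g t ^ ((N:ℝ) / p.toReal))) * I :=
            mul_le_mul_of_nonneg_left hIl hnn
        _ = A * (V ^ (1 / p.toReal) * g t ^ ((N:ℝ) / p.toReal)) := by rw [hAdef]; ring
    · refine le_trans (ENNReal.ofReal_le_ofReal ?_) hstage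
      have hIl := (hIb t htTI).2.1 hγ'
      calc vB * c₁ * cI * V ^ (1 / p.toReal) * g t ^ ((N:ℝ) / p.toReal) *
            (t ^ (-sigmaStar N α β) * Real.log t)
          = (vB * c₁ * t ^ (-(sigmaStar N α β)) *
              (V ^ (1 / p.toReal) * g t ^ ((N:ℝ) / p.toReal))) * (cI * Real.log t) := by ring
        _ ≤ (vB * c₁ * t ^ (-(sigmaStar N α β)) *
              (V ^ (1 / p.toReal) * g t ^ ((N:ℝ) / p.toReal))) * I :=
            mul_le_mul_of_nonneg_left hIl hnn
        _ = A * (V ^ (1 / p.toReal) * g t ^ ((N:ℝ) / p.toReal)) := by rw [hAdef]; ring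
    · refine le_trans (ENNReal.ofReal_le_ofReal ?_) hstage
      have hIl := (hIb t htTI).2.2 hγ'
      calc vB * c₁ * cI * V ^ (1 / p.toReal) * g t ^ ((N:ℝ) / p.toReal) *
            t ^ (-sigmaStar N α β)
          = (vB * c₁ * t ^ (-(sigmaStar N α β)) *
              (V ^ (1 / p.toReal) * g t ^ ((N:ℝ) / p.toReal))) * cI := by ring
        _ ≤ (vB * c₁ * t ^ (-(sigmaStar N α β)) *
              (V ^ (1 / p.toReal) * g t ^ ((N:ℝ) / p.toReal))) * I :=
            mul_le_mul_of_nonneg_left hIl hnn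
        _ = A * (V ^ (1 / p.toReal) * g t ^ ((N:ℝ) / p.toReal)) := by rw [hAdef]; ring
  · -- N = 4β
    have hLtop : Filter.Tendsto (fun t => Real.log (t ^ thetaV α β / g t))
        Filter.atTop Filter.atTop := by
      apply Real.tendsto_log_atTop.comp
      have h1 : Filter.Tendsto (fun t => g t / t ^ thetaV α β) Filter.atTop
          (nhdsWithin 0 (Ioi 0)) := by
        apply tendsto_nhdsWithin_of_tendsto_nhds_of_eventually_within _ hgo
        filter_upwards [Filter.eventually_gt_atTop 0] with t ht
        exact div_pos (hgpos t ht) (Real.rpow_pos_of_pos ht _)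
      have h2 := h1.inv_tendsto_nhdsGT_zero
      refine h2.congr' ?_
      filter_upwards [Filter.eventually_gt_atTop 0] with t ht
      simp only [Pi.inv_apply, inv_div]
    have ev3 := hLtop.eventually_ge_atTop 1
    have ev4 := hLtop.eventually_ge_atTop
      (2 * (thetaV α β * Real.log 2 + Real.log (μ + 1)))
    have ev5 := hgtop.eventually_ge_atTop 1
    obtain ⟨T₀, hT₀⟩ := Filter.eventually_atTop.mp (((ev1.and ev2).and (ev3.and ev4)).and ev5)
    set T₁ : ℝ := max T₀ 2 with hT₁def
    have hT₁2 : (2:ℝ) ≤ T₁ := le_max_right _ _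
    have hall : ∀ t, T₁ ≤ t → ((2 ≤ ν * g t ∧ (μ * g t + 1) * (t / 2) ^ (-(thetaV α β)) ≤ 1) ∧
        (1 ≤ Real.log (t ^ thetaV α β / g t) ∧
          2 * (thetaV α β * Real.log 2 + Real.log (μ + 1)) ≤ Real.log (t ^ thetaV α β / g t))) ∧
        1 ≤ g t := fun t ht => hT₀ t (le_trans (le_max_left _ _) ht)
    have hg2 : ∀ t, T₁ ≤ t → 2 ≤ ν * g t := fun t ht => (hall t ht).1.1.1
    have hKpos : ∀ t, T₁ ≤ t → 0 < c₁ * (Real.log (t ^ thetaV α β / g t) / 2) := by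
      intro t ht
      have h1 := (hall t ht).1.2.1
      have : 0 < Real.log (t ^ thetaV α β / g t) / 2 := by linarith
      exact mul_pos hc₁ this
    have hKcore : ∀ t, T₁ ≤ t → ∀ z : Euc N, 1 ≤ ‖z‖ → ‖z‖ ≤ μ * g t + 1 →
        ∀ r : ℝ, t / 2 ≤ r → r ≤ t →
          c₁ * (Real.log (t ^ thetaV α β / g t) / 2) ≤ G ((r ^ (-(thetaV α β))) • z) := by
      intro t ht z hz1 hz2 r hr1 hr2
      have ht2 : (2:ℝ) ≤ t := le_trans hT₁2 ht
      have ht0 : (0:ℝ) < t := by linarith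
      have hrpos : 0 < r := by linarith
      have hz0 : z ≠ 0 := fun h => by rw [h, norm_zero] at hz1; linarith
      have hrθ : 0 < r ^ (-(thetaV α β)) := Real.rpow_pos_of_pos hrpos _
      have hξ0 : (r ^ (-(thetaV α β))) • z ≠ 0 := smul_ne_zero hrθ.ne' hz0
      have hξn : ‖(r ^ (-(thetaV α β))) • z‖ = r ^ (-(thetaV α β)) * ‖z‖ := by
        rw [norm_smul, Real.norm_eq_abs, abs_of_pos hrθ]
      have hξ1 : ‖(r ^ (-(thetaV α β))) • z‖ ≤ 1 := by
        rw [hξn]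
        have hmono : r ^ (-(thetaV α β)) ≤ (t / 2) ^ (-(thetaV α β)) :=
          Real.rpow_le_rpow_of_nonpos (by linarith) hr1 (by linarith)
        have h2 := (hall t ht).1.1.2
        calc r ^ (-(thetaV α β)) * ‖z‖
            ≤ (t / 2) ^ (-(thetaV α β)) * ‖z‖ :=
              mul_le_mul_of_nonneg_right hmono (norm_nonneg z)
          _ ≤ (t / 2) ^ (-(thetaV α β)) * (μ * g t + 1) :=
              mul_le_mul_of_nonneg_left hz2 (Real.rpow_pos_of_pos (by linarith) _).le
          _ = (μ * g t + 1) * (t / 2) ^ (-(thetaV α β)) := mul_comm _ _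
          _ ≤ 1 := h2
      have hGl := hGlow₂ h4 _ hξ0 hξ1
      refine le_trans ?_ hGl
      refine mul_le_mul_of_nonneg_left ?_ hc₁.le
      -- log (t^θ / g t) / 2 ≤ 1 + |log ‖ξ‖|
      have hg0 : 0 < g t := hgpos t ht0
      have hg1 : 1 ≤ g t := (hall t ht).2
      have hlogξ : Real.log ‖(r ^ (-(thetaV α β))) • z‖
          = -(thetaV α β) * Real.log r + Real.log ‖z‖ := by
        rw [hξn, Real.log_mul hrθ.ne' (by linarith : ‖z‖ ≠ 0), Real.log_rpow hrpos]
      have habs := neg_le_abs (Real.log ‖(r ^ (-(thetaV α β))) • z‖)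
      have h2 : Real.log ‖z‖ ≤ Real.log (μ * g t + 1) :=
        Real.log_le_log (by linarith) hz2
      have h3 : Real.log (μ * g t + 1) ≤ Real.log (μ + 1) + Real.log (g t) := by
        have hle : μ * g t + 1 ≤ (μ + 1) * g t := by nlinarith
        calc Real.log (μ * g t + 1) ≤ Real.log ((μ + 1) * g t) :=
              Real.log_le_log (by nlinarith) hle
          _ = Real.log (μ + 1) + Real.log (g t) :=
              Real.log_mul (by nlinarith) (by linarith)
      have h5 : Real.log (t / 2) ≤ Real.log r := Real.log_le_log (by linarith) hr1
      have h5' : thetaV α β * Real.log (t / 2) ≤ thetaV α β * Real.log r :=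
        mul_le_mul_of_nonneg_left h5 hθ.le
      have hLdef : Real.log (t ^ thetaV α β / g t)
          = thetaV α β * Real.log t - Real.log (g t) := by
        rw [Real.log_div (Real.rpow_pos_of_pos ht0 _).ne' hg0.ne', Real.log_rpow ht0]
      have hlt2 : Real.log (t / 2) = Real.log t - Real.log 2 :=
        Real.log_div (by linarith) (by norm_num)
      have hev4 := (hall t ht).1.2.2
      rw [hLdef]
      have h5'' : thetaV α β * Real.log t - thetaV α β * Real.log 2
          ≤ thetaV α β * Real.log r := by
        rw [hlt2] at h5'; linarith
      have hkey : (thetaV α β * Real.log t - Real.log (g t)) / 2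
          ≤ -(Real.log ‖(r ^ (-(thetaV α β))) • z‖) := by
        rw [hlogξ]
        rw [hLdef] at hev4
        linarith
      have habs2 := neg_le_abs (Real.log ‖(r ^ (-(thetaV α β))) • z‖)
      linarith
    have hcore := core_lower hN α β hα0 hα1 hβ0 hC₁ hGcont hGpos hGout hGlog γ g ν μ
      (fun t => c₁ * (Real.log (t ^ thetaV α β / g t) / 2)) T₁ hT₁2 hKpos hg2 hKcore
    refine ⟨vB * (c₁ / 2) * cI * V ^ (1 / p.toReal), max T₁ TI,
      by positivity, le_trans hT₁2 (le_max_left _ _), ?_⟩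
    intro t ht
    have htT₁ : T₁ ≤ t := le_trans (le_max_left _ _) ht
    have htTI : TI ≤ t := le_trans (le_max_right _ _) ht
    have ht2 : (2:ℝ) ≤ t := le_trans hT₁2 htT₁
    have ht0 : (0:ℝ) < t := by linarith
    have hg0 : 0 < g t := hgpos t ht0
    have hgp : 0 ≤ g t ^ ((N:ℝ) / p.toReal) := Real.rpow_nonneg hg0.le _
    have hL1 : 1 ≤ Real.log (t ^ thetaV α β / g t) := (hall t htT₁).1.2.1
    set L : ℝ := Real.log (t ^ thetaV α β / g t) with hLdef'
    set I : ℝ := ∫ s in Ioo (0:ℝ) (t / 2), (1 + s) ^ (-γ) with hIdef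
    have hI0 : 0 ≤ I := by
      rw [hIdef]
      apply setIntegral_nonneg measurableSet_Ioo
      intro s hs
      have : (0:ℝ) < 1 + s := by linarith [hs.1]
      positivity
    have htσ : 0 < t ^ (-(sigmaStar N α β)) := Real.rpow_pos_of_pos ht0 _
    set A : ℝ := vB * (c₁ * (L / 2)) * t ^ (-(sigmaStar N α β)) * I with hAdef
    have hA0 : 0 ≤ A := by
      have hL0 : 0 ≤ L := by linarith
      have := mul_nonneg (mul_nonneg (mul_nonneg hvB.le
        (mul_nonneg hc₁.le (by linarith : (0:ℝ) ≤ L / 2))) htσ.le) hI0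
      exact this
    have hptw : ∀ x : Euc N, ν * g t < ‖x‖ → ‖x‖ < μ * g t →
        A ≤ mildSol N α β G (fun (y : Euc N) (s : ℝ) =>
          Set.indicator (Metric.ball (0 : Euc N) 1) (fun _ => (1 + s) ^ (-γ)) y) x t :=
      fun x h1 h2 => hcore t htT₁ x h1 h2
    have hstage := eLpNorm_stage hN p hp1
      (fun x => mildSol N α β G (fun (y : Euc N) (s : ℝ) =>
        Set.indicator (Metric.ball (0 : Euc N) 1) (fun _ => (1 + s) ^ (-γ)) y) x t)
      (ν * g t) (μ * g t) A (mul_pos hν hg0) (mul_lt_mul_of_pos_right hνμ hg0) hA0 hptw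
    rw [← hvBdef] at hstage
    have hWr : (((μ * g t) ^ N - (ν * g t) ^ N) * vB) ^ (1 / p.toReal)
        = V ^ (1 / p.toReal) * g t ^ ((N:ℝ) / p.toReal) := by
      have h1 : ((μ * g t) ^ N - (ν * g t) ^ N) * vB = V * g t ^ N := by rw [hVdef]; ring
      rw [h1, Real.mul_rpow hV.le (pow_nonneg hg0.le N), ← Real.rpow_natCast (g t) N,
        ← Real.rpow_mul hg0.le, mul_one_div]
    rw [hWr] at hstage
    have hnn : 0 ≤ vB * (c₁ * (L / 2)) * t ^ (-(sigmaStar N α β)) *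
        (V ^ (1 / p.toReal) * g t ^ ((N:ℝ) / p.toReal)) :=
      mul_nonneg (mul_nonneg (mul_nonneg hvB.le
        (mul_nonneg hc₁.le (by linarith : (0:ℝ) ≤ L / 2))) htσ.le) (mul_nonneg hVp hgp)
    refine ⟨fun hlt => absurd h4 (ne_of_lt hlt), fun _ => ⟨fun hγ' => ?_, fun hγ' => ?_,
      fun hγ' => ?_⟩⟩
    · refine le_trans (ENNReal.ofReal_le_ofReal ?_) hstage
      have hIl := (hIb t htTI).1 hγ'
      rw [show -sigmaStar N α β + 1 - γ = (-(sigmaStar N α β)) + (1 - γ) from by ring,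
        Real.rpow_add ht0]
      calc vB * (c₁ / 2) * cI * V ^ (1 / p.toReal) * g t ^ ((N:ℝ) / p.toReal) *
            (L * (t ^ (-(sigmaStar N α β)) * t ^ (1 - γ)))
          = (vB * (c₁ * (L / 2)) * t ^ (-(sigmaStar N α β)) *
              (V ^ (1 / p.toReal) * g t ^ ((N:ℝ) / p.toReal))) * (cI * t ^ (1 - γ)) := by ring
        _ ≤ (vB * (c₁ * (L / 2)) * t ^ (-(sigmaStar N α β)) *
              (V ^ (1 / p.toReal) * g t ^ ((N:ℝ) / p.toReal))) * I :=
            mul_le_mul_of_nonneg_left hIl hnn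
        _ = A * (V ^ (1 / p.toReal) * g t ^ ((N:ℝ) / p.toReal)) := by rw [hAdef]; ring
    · refine le_trans (ENNReal.ofReal_le_ofReal ?_) hstage
      have hIl := (hIb t htTI).2.1 hγ'
      calc vB * (c₁ / 2) * cI * V ^ (1 / p.toReal) * g t ^ ((N:ℝ) / p.toReal) *
            (L * (t ^ (-sigmaStar N α β) * Real.log t))
          = (vB * (c₁ * (L / 2)) * t ^ (-(sigmaStar N α β)) *
              (V ^ (1 / p.toReal) * g t ^ ((N:ℝ) / p.toReal))) * (cI * Real.log t) := by ring
        _ ≤ (vB * (c₁ * (L / 2)) * t ^ (-(sigmaStar N α β)) *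
              (V ^ (1 / p.toReal) * g t ^ ((N:ℝ) / p.toReal))) * I :=
            mul_le_mul_of_nonneg_left hIl hnn
        _ = A * (V ^ (1 / p.toReal) * g t ^ ((N:ℝ) / p.toReal)) := by rw [hAdef]; ring
    · refine le_trans (ENNReal.ofReal_le_ofReal ?_) hstage
      have hIl := (hIb t htTI).2.2 hγ'
      calc vB * (c₁ / 2) * cI * V ^ (1 / p.toReal) * g t ^ ((N:ℝ) / p.toReal) *
            (L * t ^ (-sigmaStar N α β))
          = (vB * (c₁ * (L / 2)) * t ^ (-(sigmaStar N α β)) *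
              (V ^ (1 / p.toReal) * g t ^ ((N:ℝ) / p.toReal))) * cI := by ring
        _ ≤ (vB * (c₁ * (L / 2)) * t ^ (-(sigmaStar N α β)) *
              (V ^ (1 / p.toReal) * g t ^ ((N:ℝ) / p.toReal))) * I :=
            mul_le_mul_of_nonneg_left hIl hnn
        _ = A * (V ^ (1 / p.toReal) * g t ^ ((N:ℝ) / p.toReal)) := by rw [hAdef]; ring
end
end

section
/- Let N ≥ 1 be an integer and let p ∈ [1,∞). There exists a constant C > 0 such that for every ρ > 0, ∫_{{z ∈ ℝ^N : |z| < ρ}} (1 + |log |z||)^p dz ≤ C ρ^N (1 + |log ρ|)^p, where the integral is with respect to Lebesgue measure on ℝ^N. -/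
open MeasureTheory Real Set Pointwise
open scoped ENNReal

noncomputable section

lemma g_meas (N : ℕ) (p : ℝ) (hp : 1 ≤ p) :
    Measurable (fun w : EuclideanSpace ℝ (Fin N) =>
      ENNReal.ofReal ((1 + |Real.log ‖w‖|) ^ p)) :=
  ENNReal.measurable_ofReal.comp <|
    (Real.continuous_rpow_const (by linarith)).measurable.comp
      (measurable_const.add (Real.measurable_log.comp measurable_norm).abs)

lemma summable_aux (N : ℕ) (hN : 1 ≤ N) (p : ℝ) (hp : 1 ≤ p) :
    Summable (fun n : ℕ =>
      (1 + ((n : ℝ) + 1) * Real.log 2) ^ p * (((2:ℝ)⁻¹ ^ n) ^ N)) := by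
  set k := ⌈p⌉₊ with hk
  set r : ℝ := (2:ℝ)⁻¹ ^ N with hr
  have hr0 : 0 < r := by positivity
  have hr1 : r < 1 := by
    apply pow_lt_one₀ (by norm_num) (by norm_num)
    omega
  have hs : Summable (fun n : ℕ => ((n : ℝ) + 1) ^ k * r ^ n) := by
    have h1 : Summable (fun n : ℕ => (n : ℝ) ^ k * r ^ n) :=
      summable_pow_mul_geometric_of_norm_lt_one k (by rw [Real.norm_eq_abs, abs_of_pos hr0]; exact hr1)
    have h2 := (summable_nat_add_iff 1).2 h1
    have h3 := h2.mul_left r⁻¹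
    refine h3.congr fun n => ?_
    push_cast
    field_simp
    ring
  refine Summable.of_nonneg_of_le (fun n => by positivity) (fun n => ?_) (hs.mul_left ((2:ℝ)^k))
  have hb1 : (1:ℝ) ≤ 2 * ((n:ℝ) + 1) := by nlinarith [Nat.cast_nonneg (α := ℝ) n]
  have hlog2 : Real.log 2 ≤ 1 := by
    nlinarith [Real.log_two_lt_d9]
  have hbase : 1 + ((n : ℝ) + 1) * Real.log 2 ≤ 2 * ((n:ℝ) + 1) := by
    nlinarith [Nat.cast_nonneg (α := ℝ) n, Real.log_pos (by norm_num : (1:ℝ) < 2)]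
  have h1 : (1 + ((n : ℝ) + 1) * Real.log 2) ^ p ≤ (2 * ((n:ℝ) + 1)) ^ p :=
    Real.rpow_le_rpow (by nlinarith [Real.log_pos (show (1:ℝ)<2 by norm_num), Nat.cast_nonneg (α := ℝ) n]) hbase (by linarith)
  have h2 : (2 * ((n:ℝ) + 1)) ^ p ≤ (2 * ((n:ℝ) + 1)) ^ (k : ℝ) :=
    Real.rpow_le_rpow_of_exponent_le hb1 (Nat.le_ceil p)
  have h3 : (2 * ((n:ℝ) + 1)) ^ (k : ℝ) = (2:ℝ)^k * ((n:ℝ)+1)^k := by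
    rw [Real.rpow_natCast, mul_pow]
  have h4 : ((2:ℝ)⁻¹ ^ n) ^ N = r ^ n := by rw [hr, ← pow_mul, ← pow_mul, Nat.mul_comm]
  calc (1 + ((n : ℝ) + 1) * Real.log 2) ^ p * (((2:ℝ)⁻¹ ^ n) ^ N)
      ≤ (2:ℝ)^k * ((n:ℝ)+1)^k * (((2:ℝ)⁻¹ ^ n) ^ N) := by
        apply mul_le_mul_of_nonneg_right _ (by positivity)
        rw [← h3]; exact h1.trans h2
    _ = (2:ℝ)^k * (((n:ℝ)+1)^k * r ^ n) := by rw [h4]; ring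

lemma aux_finite (N : ℕ) (hN : 1 ≤ N) (p : ℝ) (hp : 1 ≤ p) :
    (∫⁻ w in Metric.ball (0 : EuclideanSpace ℝ (Fin N)) 1,
      ENNReal.ofReal ((1 + |Real.log ‖w‖|) ^ p)) < ∞ := by
  haveI : Nonempty (Fin N) := ⟨⟨0, hN⟩⟩
  haveI : Nontrivial (EuclideanSpace ℝ (Fin N)) := inferInstance
  set E := EuclideanSpace ℝ (Fin N)
  set g : E → ℝ≥0∞ := fun w => ENNReal.ofReal ((1 + |Real.log ‖w‖|) ^ p) with hg
  set S : ℕ → Set E := fun n => {w | (2:ℝ)⁻¹ ^ (n+1) ≤ ‖w‖ ∧ ‖w‖ < (2:ℝ)⁻¹ ^ n} with hS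
  set B : ℝ≥0∞ := volume (Metric.ball (0:E) 1) with hB
  have hBfin : B < ∞ := measure_ball_lt_top
  have hsub : Metric.ball (0:E) 1 \ {0} ⊆ ⋃ n, S n := by
    intro w hw
    obtain ⟨hw1, hw0⟩ := hw
    have hr0 : 0 < ‖w‖ := norm_pos_iff.2 (by simpa using hw0)
    have hr1 : ‖w‖ < 1 := by simpa [mem_ball_zero_iff] using hw1
    obtain ⟨m, hm1, hm2⟩ := exists_mem_Ico_zpow hr0 (show (1:ℝ) < 2 by norm_num)
    have hmneg : m < 0 := by
      by_contra h
      push_neg at h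
      have h1 : (2:ℝ) ^ (0:ℤ) ≤ 2 ^ m := zpow_le_zpow_right₀ (by norm_num) h
      simp only [zpow_zero] at h1
      linarith
    set n : ℕ := (-(m+1)).toNat with hn'
    have hn : (n:ℤ) = -(m+1) := Int.toNat_of_nonneg (by omega)
    have e1 : ((2:ℝ)⁻¹) ^ (n+1) = (2:ℝ) ^ m := by
      rw [inv_pow, ← zpow_natCast, ← zpow_neg]
      congr 1
      push_cast
      omega
    have e2 : ((2:ℝ)⁻¹) ^ n = (2:ℝ) ^ (m+1) := by
      rw [inv_pow, ← zpow_natCast, ← zpow_neg]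
      congr 1
      omega
    exact mem_iUnion.2 ⟨n, by rw [hS]; exact ⟨e1.le.trans hm1, by rw [e2]; exact hm2⟩⟩
  have key : ∀ n : ℕ, (∫⁻ w in S n, g w) ≤
      ENNReal.ofReal ((1 + ((n:ℝ)+1) * Real.log 2) ^ p * (((2:ℝ)⁻¹ ^ n) ^ N)) * B := by
    intro n
    have hbound : ∀ w ∈ S n, g w ≤ ENNReal.ofReal ((1 + ((n:ℝ)+1) * Real.log 2) ^ p) := by
      intro w hw
      obtain ⟨h1, h2⟩ := hw
      have hw0 : 0 < ‖w‖ := lt_of_lt_of_le (by positivity) h1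
      have hle1 : ‖w‖ ≤ 1 := le_of_lt (lt_of_lt_of_le h2 (pow_le_one₀ (by norm_num) (by norm_num)))
      have hlogle : Real.log ‖w‖ ≤ 0 := Real.log_nonpos hw0.le hle1
      have hlow : Real.log ((2:ℝ)⁻¹ ^ (n+1)) ≤ Real.log ‖w‖ :=
        Real.log_le_log (by positivity) h1
      have hval : Real.log ((2:ℝ)⁻¹ ^ (n+1)) = -(((n:ℝ)+1) * Real.log 2) := by
        rw [Real.log_pow, Real.log_inv]
        push_cast
        ring
      have habs : |Real.log ‖w‖| ≤ ((n:ℝ)+1) * Real.log 2 := by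
        rw [abs_of_nonpos hlogle]
        rw [hval] at hlow
        linarith
      apply ENNReal.ofReal_le_ofReal
      apply Real.rpow_le_rpow (by positivity) (by linarith) (by linarith)
    calc (∫⁻ w in S n, g w)
        ≤ ∫⁻ _ in S n, ENNReal.ofReal ((1 + ((n:ℝ)+1) * Real.log 2) ^ p) :=
          setLIntegral_mono measurable_const hbound
      _ = ENNReal.ofReal ((1 + ((n:ℝ)+1) * Real.log 2) ^ p) * volume (S n) :=
          setLIntegral_const _ _
      _ ≤ ENNReal.ofReal ((1 + ((n:ℝ)+1) * Real.log 2) ^ p) *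
            (ENNReal.ofReal (((2:ℝ)⁻¹ ^ n) ^ N) * B) := by
          gcongr
          have hsb : S n ⊆ Metric.ball (0:E) ((2:ℝ)⁻¹ ^ n) := fun w hw =>
            mem_ball_zero_iff.2 hw.2
          calc volume (S n) ≤ volume (Metric.ball (0:E) ((2:ℝ)⁻¹ ^ n)) := measure_mono hsb
            _ = ENNReal.ofReal (((2:ℝ)⁻¹ ^ n) ^ N) * B := by
                rw [Measure.addHaar_ball _ _ (by positivity)]
                have hfr : Module.finrank ℝ E = N := finrank_euclideanSpace_fin
                rw [hfr]
      _ = ENNReal.ofReal ((1 + ((n:ℝ)+1) * Real.log 2) ^ p * (((2:ℝ)⁻¹ ^ n) ^ N)) * B := by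
          rw [ENNReal.ofReal_mul (by positivity), mul_assoc]
  have hnull : (Metric.ball (0:E) 1 : Set E) =ᵐ[volume] (Metric.ball (0:E) 1 \ {0} : Set E) := by
    refine (diff_ae_eq_self.2 ?_).symm
    first
    | exact measure_mono_null inter_subset_left (measure_singleton 0)
    | exact measure_mono_null inter_subset_right (measure_singleton 0)
  calc (∫⁻ w in Metric.ball (0:E) 1, g w)
      = ∫⁻ w in Metric.ball (0:E) 1 \ {0}, g w := setLIntegral_congr hnull
    _ ≤ ∫⁻ w in ⋃ n, S n, g w := lintegral_mono_set hsub
    _ ≤ ∑' n : ℕ, ∫⁻ w in S n, g w := lintegral_iUnion_le _ _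
    _ ≤ ∑' n : ℕ, ENNReal.ofReal ((1 + ((n:ℝ)+1) * Real.log 2) ^ p * (((2:ℝ)⁻¹ ^ n) ^ N)) * B :=
        ENNReal.tsum_le_tsum key
    _ = ENNReal.ofReal (∑' n : ℕ, (1 + ((n:ℝ)+1) * Real.log 2) ^ p * (((2:ℝ)⁻¹ ^ n) ^ N)) * B := by
        rw [ENNReal.tsum_mul_right,
          ENNReal.ofReal_tsum_of_nonneg (fun n => by positivity) (summable_aux N hN p hp)]
    _ < ∞ := ENNReal.mul_lt_top ENNReal.ofReal_lt_top hBfin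

theorem log_integral_ball (N : ℕ) (hN : 1 ≤ N) (p : ℝ) (hp : 1 ≤ p) :
    ∃ C : ℝ, 0 < C ∧ ∀ ρ : ℝ, 0 < ρ →
      (∫⁻ z in Metric.ball (0 : EuclideanSpace ℝ (Fin N)) ρ,
          ENNReal.ofReal ((1 + |Real.log ‖z‖|) ^ p)) ≤
        ENNReal.ofReal (C * ρ ^ (N : ℝ) * (1 + |Real.log ρ|) ^ p) := by
  haveI : Nonempty (Fin N) := ⟨⟨0, hN⟩⟩
  set E := EuclideanSpace ℝ (Fin N)
  set g : E → ℝ≥0∞ := fun w => ENNReal.ofReal ((1 + |Real.log ‖w‖|) ^ p) with hgdef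
  have gm : Measurable g := g_meas N p hp
  set I₀ : ℝ≥0∞ := ∫⁻ w in Metric.ball (0:E) 1, g w with hI
  have hfin : I₀ < ∞ := aux_finite N hN p hp
  have hpos : 0 < I₀ := by
    have h1 : volume (Metric.ball (0:E) 1) ≤ I₀ := by
      rw [hI, ← setLIntegral_one (Metric.ball (0:E) 1)]
      refine setLIntegral_mono gm fun w _ => ?_
      rw [show (1:ℝ≥0∞) = ENNReal.ofReal 1 by simp]
      exact ENNReal.ofReal_le_ofReal
        (Real.one_le_rpow (le_add_of_nonneg_right (abs_nonneg _)) (by linarith))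
    exact lt_of_lt_of_le (Metric.measure_ball_pos volume 0 one_pos) h1
  refine ⟨I₀.toReal, ENNReal.toReal_pos hpos.ne' hfin.ne, fun ρ hρ => ?_⟩
  have hfr : Module.finrank ℝ E = N := finrank_euclideanSpace_fin
  -- pointwise bound
  have hpt : ∀ z : E, (1 + |Real.log ‖z‖|) ≤
      (1 + |Real.log ρ|) * (1 + |Real.log ‖ρ⁻¹ • z‖|) := by
    intro z
    rcases eq_or_ne z 0 with rfl | hz
    · simp [Real.log_zero]
    · have hz0 : 0 < ‖z‖ := norm_pos_iff.2 hz
      have hns : ‖ρ⁻¹ • z‖ = ρ⁻¹ * ‖z‖ := by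
        rw [norm_smul, Real.norm_eq_abs, abs_of_pos (by positivity)]
      have hlog : Real.log ‖ρ⁻¹ • z‖ = Real.log ‖z‖ - Real.log ρ := by
        rw [hns, Real.log_mul (by positivity) hz0.ne', Real.log_inv]
        ring
      have h1 : |Real.log ‖z‖| ≤ |Real.log ρ| + |Real.log ‖ρ⁻¹ • z‖| := by
        rw [hlog]
        have := abs_add_le (Real.log ρ) (Real.log ‖z‖ - Real.log ρ)
        simpa using this
      nlinarith [abs_nonneg (Real.log ρ), abs_nonneg (Real.log ‖ρ⁻¹ • z‖)]
  -- scaling identity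
  have hmap : Measure.map (fun z : E => ρ⁻¹ • z) volume
      = ENNReal.ofReal (ρ ^ N) • (volume : Measure E) := by
    rw [Measure.map_addHaar_smul volume (inv_ne_zero hρ.ne')]
    congr 1
    rw [hfr, ← inv_pow, inv_inv, abs_of_pos (by positivity)]
  have hpre : (fun z : E => ρ⁻¹ • z) ⁻¹' Metric.ball (0:E) 1 = Metric.ball (0:E) ρ := by
    ext z
    simp only [mem_preimage, mem_ball_zero_iff, norm_smul, Real.norm_eq_abs,
      abs_of_pos (inv_pos.2 hρ)]
    rw [inv_mul_lt_iff₀ hρ, mul_one]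
  have hscal : (∫⁻ z in Metric.ball (0:E) ρ, g (ρ⁻¹ • z)) = ENNReal.ofReal (ρ ^ N) * I₀ := by
    have := setLIntegral_map (μ := (volume : Measure E)) (s := Metric.ball (0:E) 1)
      measurableSet_ball gm (measurable_const_smul (M := ℝ) ρ⁻¹)
    rw [hmap, hpre] at this
    rw [← this, Measure.restrict_smul, lintegral_smul_measure]
    rw [smul_eq_mul, hI]
  calc (∫⁻ z in Metric.ball (0:E) ρ, ENNReal.ofReal ((1 + |Real.log ‖z‖|) ^ p))
      ≤ ∫⁻ z in Metric.ball (0:E) ρ,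
          ENNReal.ofReal ((1 + |Real.log ρ|) ^ p) * g (ρ⁻¹ • z) := by
        refine setLIntegral_mono
          (measurable_const.mul (gm.comp (measurable_const_smul (M := ℝ) ρ⁻¹))) fun z _ => ?_
        rw [hgdef]
        simp only
        rw [← ENNReal.ofReal_mul (by positivity), ← Real.mul_rpow (by positivity) (by positivity)]
        exact ENNReal.ofReal_le_ofReal
          (Real.rpow_le_rpow (by positivity) (hpt z) (by linarith))
    _ = ENNReal.ofReal ((1 + |Real.log ρ|) ^ p) *
          ∫⁻ z in Metric.ball (0:E) ρ, g (ρ⁻¹ • z) :=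
        lintegral_const_mul _ (gm.comp (measurable_const_smul (M := ℝ) ρ⁻¹))
    _ = ENNReal.ofReal ((1 + |Real.log ρ|) ^ p) * (ENNReal.ofReal (ρ ^ N) * I₀) := by
        rw [hscal]
    _ = ENNReal.ofReal (I₀.toReal * ρ ^ (N:ℝ) * (1 + |Real.log ρ|) ^ p) := by
        conv_lhs => rw [show I₀ = ENNReal.ofReal I₀.toReal from (ENNReal.ofReal_toReal hfin.ne).symm]
        rw [← ENNReal.ofReal_mul (by positivity), ← ENNReal.ofReal_mul (by positivity)]
        congr 1
        rw [Real.rpow_natCast]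
        ring
end
end

section
/- Suppose N ≥ 2β. Let γ ∈ ℝ and take the specific forcing term f(x,t) := (1+t)^{-γ} 𝟙_{B_1(0)}(x). Then there exist c > 0, δ ∈ (0,1) and T ≥ 2 such that for all t ≥ T and all x with 1 < |x| ≤ δ t^θ, the mild solution u satisfies: u(x,t) ≥ c t^{-γ} log(t^θ/|x|) if N = 2β, and u(x,t) ≥ c t^{-γ} |x|^{2β-N} if 2β < N ≤ 4β (note (1-σ*)/θ = 2β - N). -/
open MeasureTheory Real Set Pointwise
open scoped ENNReal

noncomputable section

set_option maxHeartbeats 1600000 in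
lemma integrable_H (N : ℕ) (hN : 1 ≤ N) (α β : ℝ) (hα0 : 0 < α) (hα1 : α < 1) (hβ0 : 0 < β)
    (G : Euc N → ℝ) (C₁ : ℝ) (hC₁ : 0 < C₁)
    (hGcont : ContinuousOn G {(0 : Euc N)}ᶜ)
    (hGpos : ∀ ξ : Euc N, ξ ≠ 0 → 0 < G ξ)
    (hGub : ∀ ξ : Euc N, ξ ≠ 0 → ‖ξ‖ ≤ 1 → G ξ ≤ C₁ * (1 + |Real.log ‖ξ‖|))
    (hGout : ∀ ξ : Euc N, 1 ≤ ‖ξ‖ → G ξ ≤ C₁ * ‖ξ‖ ^ (-((N : ℝ) + 2 * β)))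
    (γ : ℝ) (x : Euc N) (hx : 1 < ‖x‖) (t : ℝ) (ht : 2 ≤ t) :
    Integrable (fun p : ℝ × Euc N => kernelY N α β G (x - p.2) (t - p.1) *
        Set.indicator (Metric.ball (0 : Euc N) 1) (fun _ => (1 + p.1) ^ (-γ)) p.2)
      ((volume.restrict (Ioo (0:ℝ) t)).prod volume) := by

  haveI : Nonempty (Fin N) := ⟨⟨0, hN⟩⟩
  haveI : Nontrivial (Euc N) := inferInstance
  have hθ0 : 0 < thetaV α β := div_pos hα0 (by linarith)
  have hσ0 : 0 < sigmaStar N α β := by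
    have : 0 ≤ (N : ℝ) * thetaV α β := mul_nonneg (Nat.cast_nonneg N) hθ0.le
    unfold sigmaStar; linarith
  set θ := thetaV α β with hθdef
  set σ := sigmaStar N α β with hσdef
  have ht0 : (0:ℝ) < t := by linarith
  have hρ0 : (0:ℝ) < ‖x‖ - 1 := by linarith
  set ρ : ℝ := ‖x‖ - 1 with hρdef
  set pp := ((volume.restrict (Ioo (0:ℝ) t)).prod (volume : Measure (Euc N))) with hppdef
  set K : ℝ × Euc N → ℝ := fun p =>
    (t - p.1) ^ (-σ) * G (((t - p.1) ^ (-θ)) • (x - p.2)) * (1 + p.1) ^ (-γ) with hKdef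
  have hHeq : (fun p : ℝ × Euc N => kernelY N α β G (x - p.2) (t - p.1) *
      Set.indicator (Metric.ball (0 : Euc N) 1) (fun _ => (1 + p.1) ^ (-γ)) p.2)
      = Set.indicator ((Set.univ : Set ℝ) ×ˢ Metric.ball (0 : Euc N) 1) K := by
    funext p
    by_cases hp : p.2 ∈ Metric.ball (0 : Euc N) 1
    · rw [Set.indicator_of_mem hp, Set.indicator_of_mem (by simp [hp])]
      simp [hKdef, kernelY, mul_assoc, hσdef, hθdef]
    · rw [Set.indicator_of_notMem hp, Set.indicator_of_notMem (by simp [hp]), mul_zero]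
  rw [hHeq]
  -- null complement facts
  have hnull1 : pp (((Ioo (0:ℝ) t)ᶜ) ×ˢ (Set.univ : Set (Euc N))) = 0 := by
    rw [hppdef, Measure.prod_prod, Measure.restrict_apply measurableSet_Ioo.compl]
    simp
  have hnull2 : pp ((Set.univ : Set ℝ) ×ˢ ({x} : Set (Euc N))) = 0 := by
    rw [hppdef, Measure.prod_prod]
    simp [measure_singleton]
  have haemem : ∀ᵐ p ∂pp, p ∈ (Ioo (0:ℝ) t) ×ˢ ({x}ᶜ : Set (Euc N)) := by
    rw [MeasureTheory.ae_iff]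
    refine measure_mono_null ?_ (measure_union_null hnull1 hnull2)
    intro p hp
    simp only [Set.mem_prod, Set.mem_compl_iff, Set.mem_singleton_iff, not_and_or, not_not,
      Set.mem_setOf_eq] at hp ⊢
    rcases hp with h | h
    · exact Or.inl ⟨h, trivial⟩
    · exact Or.inr ⟨trivial, h⟩
  -- measurability
  have hU : IsOpen ((Ioo (0:ℝ) t) ×ˢ ({x}ᶜ : Set (Euc N))) :=
    isOpen_Ioo.prod isOpen_compl_singleton
  have hKcont : ContinuousOn K ((Ioo (0:ℝ) t) ×ˢ ({x}ᶜ : Set (Euc N))) := by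
    have hsub : ContinuousOn (fun p : ℝ × Euc N => t - p.1)
        ((Ioo (0:ℝ) t) ×ˢ ({x}ᶜ : Set (Euc N))) :=
      (continuous_const.sub continuous_fst).continuousOn
    have hne : ∀ p ∈ (Ioo (0:ℝ) t) ×ˢ ({x}ᶜ : Set (Euc N)), t - p.1 ≠ 0 := by
      intro p hp; have := hp.1.2; intro h; rw [sub_eq_zero] at h; exact absurd h.symm (ne_of_lt this)
    have c1 : ContinuousOn (fun p : ℝ × Euc N => (t - p.1) ^ (-σ))
        ((Ioo (0:ℝ) t) ×ˢ ({x}ᶜ : Set (Euc N))) :=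
      hsub.rpow_const fun p hp => Or.inl (hne p hp)
    have cθ : ContinuousOn (fun p : ℝ × Euc N => (t - p.1) ^ (-θ))
        ((Ioo (0:ℝ) t) ×ˢ ({x}ᶜ : Set (Euc N))) :=
      hsub.rpow_const fun p hp => Or.inl (hne p hp)
    have cin : ContinuousOn (fun p : ℝ × Euc N => ((t - p.1) ^ (-θ)) • (x - p.2))
        ((Ioo (0:ℝ) t) ×ˢ ({x}ᶜ : Set (Euc N))) :=
      cθ.smul (continuous_const.sub continuous_snd).continuousOn
    have hmaps : ∀ p ∈ (Ioo (0:ℝ) t) ×ˢ ({x}ᶜ : Set (Euc N)),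
        ((t - p.1) ^ (-θ)) • (x - p.2) ∈ ({(0 : Euc N)}ᶜ : Set (Euc N)) := by
      intro p hp
      have h1 : t - p.1 > 0 := by have := hp.1.2; linarith
      have h2 : x - p.2 ≠ 0 := sub_ne_zero.2 (Ne.symm hp.2)
      simp only [Set.mem_compl_iff, Set.mem_singleton_iff]
      exact smul_ne_zero (ne_of_gt (Real.rpow_pos_of_pos h1 _)) h2
    have cG : ContinuousOn (fun p : ℝ × Euc N => G (((t - p.1) ^ (-θ)) • (x - p.2)))
        ((Ioo (0:ℝ) t) ×ˢ ({x}ᶜ : Set (Euc N))) :=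
      hGcont.comp cin hmaps
    have cone : ContinuousOn (fun p : ℝ × Euc N => (1 + p.1) ^ (-γ))
        ((Ioo (0:ℝ) t) ×ˢ ({x}ᶜ : Set (Euc N))) := by
      refine ((continuous_const.add continuous_fst).continuousOn).rpow_const fun p hp => Or.inl ?_
      have : 0 < p.1 := hp.1.1; show 1 + p.1 ≠ 0; exact ne_of_gt (by linarith)
    exact (c1.mul cG).mul cone
  have hKmeas : AEStronglyMeasurable K pp := by
    have h1 : AEStronglyMeasurable K
        (pp.restrict ((Ioo (0:ℝ) t) ×ˢ ({x}ᶜ : Set (Euc N)))) :=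
      hKcont.aestronglyMeasurable (hU.measurableSet)
    rwa [Measure.restrict_eq_self_of_ae_mem haemem] at h1
  have hmeas : AEStronglyMeasurable
      (Set.indicator ((Set.univ : Set ℝ) ×ˢ Metric.ball (0 : Euc N) 1) K) pp :=
    hKmeas.indicator (MeasurableSet.univ.prod measurableSet_ball)

  -- domination
  set M : ℝ := (1 + t) ^ |γ| with hMdef
  have hM0 : 0 < M := Real.rpow_pos_of_pos (by linarith) _
  set Λ : ℝ := |Real.log ρ| + |Real.log (‖x‖ + 1)| with hΛdef
  have hΛ0 : 0 ≤ Λ := add_nonneg (abs_nonneg _) (abs_nonneg _)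
  set B₂ : ℝ := M * (C₁ * ρ ^ (-(σ / θ)) * (1 + θ * (|Real.log t| + (1/θ) * |Real.log ρ|) + Λ))
    with hB₂def
  set B₁ : ℝ := M * (C₁ * ρ ^ (-((N:ℝ) + 2 * β))) with hB₁def
  have hB₂0 : 0 ≤ B₂ := by
    have h1 : 0 ≤ θ * (|Real.log t| + (1/θ) * |Real.log ρ|) := by positivity
    have h2 : (0:ℝ) < ρ ^ (-(σ / θ)) := Real.rpow_pos_of_pos hρ0 _
    have : 0 ≤ 1 + θ * (|Real.log t| + (1/θ) * |Real.log ρ|) + Λ := by linarith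
    positivity
  have hB₁0 : 0 ≤ B₁ := by
    have : (0:ℝ) < ρ ^ (-((N:ℝ) + 2 * β)) := Real.rpow_pos_of_pos hρ0 _
    positivity
  have hΦint : Integrable (fun p : ℝ × Euc N =>
      (B₂ + B₁ * (t - p.1) ^ (2*α - 1)) *
        Set.indicator (Metric.ball (0 : Euc N) 1) (fun _ => (1:ℝ)) p.2) pp := by
    have hleft : Integrable (fun s : ℝ => B₂ + B₁ * (t - s) ^ (2*α - 1))
        (volume.restrict (Ioo (0:ℝ) t)) := by
      have hconst : Integrable (fun _ : ℝ => B₂) (volume.restrict (Ioo (0:ℝ) t)) := by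
        refine integrableOn_const ?_
        exact measure_Ioo_lt_top.ne
      have hri : IntervalIntegrable (fun τ : ℝ => τ ^ (2*α - 1)) volume 0 t :=
        intervalIntegral.intervalIntegrable_rpow' (by linarith)
      have hri2 := (hri.comp_sub_left t).symm
      simp only [sub_zero, sub_self] at hri2
      have hri3 : IntegrableOn (fun s : ℝ => (t - s) ^ (2*α - 1)) (Ioo 0 t) volume := by
        have := (intervalIntegrable_iff_integrableOn_Ioc_of_le (le_of_lt ht0)).1 hri2
        exact this.mono_set Ioo_subset_Ioc_self
      exact hconst.add (hri3.const_mul B₁)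
    have hright : Integrable (Set.indicator (Metric.ball (0 : Euc N) 1) (fun _ => (1:ℝ)))
        (volume : Measure (Euc N)) :=
      (integrable_indicator_iff measurableSet_ball).2
        (integrableOn_const measure_ball_lt_top.ne)
    exact hleft.mul_prod hright
  refine Integrable.mono' hΦint hmeas ?_
  refine haemem.mono fun p hp => ?_
  have hp1 : p.1 ∈ Ioo (0:ℝ) t := hp.1
  by_cases hy : p.2 ∈ Metric.ball (0 : Euc N) 1
  · rw [Set.indicator_of_mem (by exact ⟨trivial, hy⟩ :
      p ∈ (Set.univ : Set ℝ) ×ˢ Metric.ball (0 : Euc N) 1),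
      Set.indicator_of_mem hy]
    set τ : ℝ := t - p.1 with hτdef
    have hτ0 : 0 < τ := by have := hp1.2; simp only [hτdef]; linarith
    have hτt : τ ≤ t := by have := hp1.1; simp only [hτdef]; linarith
    have hyn : ‖p.2‖ < 1 := by simpa using hy
    set r : ℝ := ‖x - p.2‖ with hrdef
    have hrρ : ρ ≤ r := by
      have := norm_sub_norm_le x p.2
      simp only [hρdef, hrdef]; linarith
    have hrR : r ≤ ‖x‖ + 1 := (norm_sub_le _ _).trans (by linarith)
    have hr0 : 0 < r := lt_of_lt_of_le hρ0 hrρ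
    have hxy0 : x - p.2 ≠ 0 := sub_ne_zero.2 (fun h => by rw [h] at hx; linarith)
    set ξ : Euc N := ((t - p.1) ^ (-θ)) • (x - p.2) with hξdef
    have hξ0 : ξ ≠ 0 := smul_ne_zero (ne_of_gt (Real.rpow_pos_of_pos hτ0 _)) hxy0
    have hξnorm : ‖ξ‖ = τ ^ (-θ) * r := by
      rw [hξdef, norm_smul, Real.norm_eq_abs, abs_of_pos (Real.rpow_pos_of_pos hτ0 _)]
    have hKval : K p = τ ^ (-σ) * G ξ * (1 + p.1) ^ (-γ) := rfl
    have hG0 : 0 ≤ G ξ := (hGpos ξ hξ0).le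
    have h1p : 0 < 1 + p.1 := by have := hp1.1; linarith
    have hKnn : 0 ≤ K p := by
      rw [hKval]
      have : (0:ℝ) ≤ τ ^ (-σ) := (Real.rpow_pos_of_pos hτ0 _).le
      positivity
    rw [Real.norm_of_nonneg hKnn]
    have hMbound : (1 + p.1) ^ (-γ) ≤ M := by
      calc (1 + p.1) ^ (-γ) ≤ (1 + p.1) ^ |γ| :=
            Real.rpow_le_rpow_of_exponent_le (by linarith) (neg_le_abs γ)
        _ ≤ (1 + t) ^ |γ| := by
            refine Real.rpow_le_rpow (by linarith) ?_ (abs_nonneg γ)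
            have := hp1.2; linarith
    set D : ℝ := C₁ * ρ ^ (-(σ / θ)) * (1 + θ * (|Real.log t| + (1/θ) * |Real.log ρ|) + Λ)
      + C₁ * ρ ^ (-((N:ℝ) + 2 * β)) * τ ^ (2*α - 1) with hDdef
    have hD0 : 0 ≤ D := by
      have h1 : 0 ≤ θ * (|Real.log t| + (1/θ) * |Real.log ρ|) := by positivity
      have h2 : (0:ℝ) < ρ ^ (-(σ / θ)) := Real.rpow_pos_of_pos hρ0 _
      have h2' : (0:ℝ) < ρ ^ (-((N:ℝ) + 2 * β)) := Real.rpow_pos_of_pos hρ0 _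
      have h3 : (0:ℝ) ≤ τ ^ (2*α - 1) := (Real.rpow_pos_of_pos hτ0 _).le
      have h4 : 0 ≤ 1 + θ * (|Real.log t| + (1/θ) * |Real.log ρ|) + Λ := by linarith
      positivity
    have hYbound : τ ^ (-σ) * G ξ ≤ D := by
      rcases le_total ‖ξ‖ 1 with hξ1 | hξ1
      · -- inner regime
        have hbd := hGub ξ hξ0 hξ1
        have hrτθ : r ≤ τ ^ θ := by
          have h1 : τ ^ (-θ) = (τ ^ θ)⁻¹ := Real.rpow_neg hτ0.le θ
          rw [hξnorm, h1, inv_mul_eq_div, div_le_one (Real.rpow_pos_of_pos hτ0 _)] at hξ1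
          exact hξ1
        have hρτ : ρ ^ (1/θ) ≤ τ := by
          have h1 : ρ ≤ τ ^ θ := le_trans hrρ hrτθ
          have h2 : ρ ^ (1/θ) ≤ (τ ^ θ) ^ (1/θ) :=
            Real.rpow_le_rpow hρ0.le h1 (by positivity)
          rwa [← Real.rpow_mul hτ0.le, mul_one_div_cancel hθ0.ne', Real.rpow_one] at h2
        have hτσ : τ ^ (-σ) ≤ ρ ^ (-(σ / θ)) := by
          have h1 : τ ^ (-σ) ≤ (ρ ^ (1/θ)) ^ (-σ) :=
            Real.rpow_le_rpow_of_nonpos (Real.rpow_pos_of_pos hρ0 _) hρτ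
              (neg_nonpos.2 hσ0.le)
          rwa [← Real.rpow_mul hρ0.le, show (1/θ) * (-σ) = -(σ/θ) by ring] at h1
        have hlogr : |Real.log r| ≤ Λ := by
          rw [hΛdef]
          have h1 : Real.log ρ ≤ Real.log r := Real.log_le_log hρ0 hrρ
          have h2 : Real.log r ≤ Real.log (‖x‖ + 1) := Real.log_le_log hr0 hrR
          rw [abs_le]
          constructor
          · have := neg_abs_le (Real.log ρ); have := abs_nonneg (Real.log (‖x‖+1)); linarith
          · have := le_abs_self (Real.log (‖x‖+1)); have := abs_nonneg (Real.log ρ); linarith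
        have hlogτ : |Real.log τ| ≤ |Real.log t| + (1/θ) * |Real.log ρ| := by
          rw [abs_le]
          constructor
          · have h1 : Real.log (ρ ^ (1/θ)) ≤ Real.log τ :=
              Real.log_le_log (Real.rpow_pos_of_pos hρ0 _) hρτ
            rw [Real.log_rpow hρ0] at h1
            have h2 : -((1/θ) * |Real.log ρ|) ≤ (1/θ) * Real.log ρ := by
              have h3 := mul_le_mul_of_nonneg_left (neg_abs_le (Real.log ρ))
                (le_of_lt (by positivity : (0:ℝ) < 1/θ))
              rw [mul_neg] at h3; linarith
            have := abs_nonneg (Real.log t); linarith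
          · have h1 : Real.log τ ≤ Real.log t := Real.log_le_log hτ0 hτt
            have := le_abs_self (Real.log t)
            have h2 : 0 ≤ (1/θ) * |Real.log ρ| := by positivity
            linarith
        have hlogξ : |Real.log ‖ξ‖| ≤ θ * (|Real.log t| + (1/θ) * |Real.log ρ|) + Λ := by
          have h1 : Real.log ‖ξ‖ = -θ * Real.log τ + Real.log r := by
            rw [hξnorm, Real.log_mul (ne_of_gt (Real.rpow_pos_of_pos hτ0 _)) (ne_of_gt hr0),
              Real.log_rpow hτ0]
          rw [h1]
          calc |(-θ) * Real.log τ + Real.log r| ≤ |(-θ) * Real.log τ| + |Real.log r| :=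
                abs_add_le _ _
            _ = θ * |Real.log τ| + |Real.log r| := by
                rw [abs_mul, abs_neg, abs_of_pos hθ0]
            _ ≤ θ * (|Real.log t| + (1/θ) * |Real.log ρ|) + Λ := by
                have := mul_le_mul_of_nonneg_left hlogτ hθ0.le
                linarith
        have hGb : G ξ ≤ C₁ * (1 + θ * (|Real.log t| + (1/θ) * |Real.log ρ|) + Λ) := by
          refine le_trans hbd ?_
          have : 1 + |Real.log ‖ξ‖| ≤ 1 + θ * (|Real.log t| + (1/θ) * |Real.log ρ|) + Λ := by
            linarith
          exact mul_le_mul_of_nonneg_left this hC₁.le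
        have hmain : τ ^ (-σ) * G ξ ≤
            C₁ * ρ ^ (-(σ/θ)) * (1 + θ * (|Real.log t| + (1/θ) * |Real.log ρ|) + Λ) := by
          calc τ ^ (-σ) * G ξ ≤
              ρ ^ (-(σ/θ)) * (C₁ * (1 + θ * (|Real.log t| + (1/θ) * |Real.log ρ|) + Λ)) :=
                mul_le_mul hτσ hGb hG0 (Real.rpow_pos_of_pos hρ0 _).le
            _ = C₁ * ρ ^ (-(σ/θ)) * (1 + θ * (|Real.log t| + (1/θ) * |Real.log ρ|) + Λ) := by
                ring
        rw [hDdef]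
        have h5 : (0:ℝ) ≤ C₁ * ρ ^ (-((N:ℝ) + 2 * β)) * τ ^ (2*α - 1) := by
          have h5a : (0:ℝ) < ρ ^ (-((N:ℝ) + 2 * β)) := Real.rpow_pos_of_pos hρ0 _
          have h5b : (0:ℝ) ≤ τ ^ (2*α - 1) := (Real.rpow_pos_of_pos hτ0 _).le
          positivity
        linarith
      · -- outer regime
        have hbd := hGout ξ hξ1
        have hsplit : ‖ξ‖ ^ (-((N:ℝ) + 2*β)) =
            τ ^ ((-θ) * (-((N:ℝ) + 2*β))) * r ^ (-((N:ℝ) + 2*β)) := by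
          rw [hξnorm, Real.mul_rpow (Real.rpow_pos_of_pos hτ0 _).le hr0.le,
            ← Real.rpow_mul hτ0.le]
        have hrbound : r ^ (-((N:ℝ) + 2*β)) ≤ ρ ^ (-((N:ℝ) + 2*β)) := by
          refine Real.rpow_le_rpow_of_nonpos hρ0 hrρ ?_
          have : (0:ℝ) ≤ (N:ℝ) + 2*β := by positivity
          linarith
        have hexp : -σ + (-θ) * (-((N:ℝ) + 2*β)) = 2*α - 1 := by
          rw [hσdef, hθdef]; unfold sigmaStar thetaV; field_simp; ring
        have hmain : τ ^ (-σ) * G ξ ≤ C₁ * ρ ^ (-((N:ℝ) + 2*β)) * τ ^ (2*α - 1) := by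
          calc τ ^ (-σ) * G ξ ≤ τ ^ (-σ) * (C₁ * ‖ξ‖ ^ (-((N:ℝ) + 2*β))) :=
                mul_le_mul_of_nonneg_left hbd (Real.rpow_pos_of_pos hτ0 _).le
            _ = C₁ * (τ ^ (-σ) * τ ^ ((-θ) * (-((N:ℝ) + 2*β)))) * r ^ (-((N:ℝ) + 2*β)) := by
                rw [hsplit]; ring
            _ = C₁ * τ ^ (2*α - 1) * r ^ (-((N:ℝ) + 2*β)) := by
                rw [← Real.rpow_add hτ0, hexp]
            _ ≤ C₁ * ρ ^ (-((N:ℝ) + 2*β)) * τ ^ (2*α - 1) := by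
                have h6 : (0:ℝ) ≤ C₁ * τ ^ (2*α-1) := by
                  have : (0:ℝ) ≤ τ ^ (2*α-1) := (Real.rpow_pos_of_pos hτ0 _).le
                  positivity
                calc C₁ * τ ^ (2*α - 1) * r ^ (-((N:ℝ) + 2*β))
                    ≤ C₁ * τ ^ (2*α - 1) * ρ ^ (-((N:ℝ) + 2*β)) :=
                      mul_le_mul_of_nonneg_left hrbound h6
                  _ = C₁ * ρ ^ (-((N:ℝ) + 2*β)) * τ ^ (2*α - 1) := by ring
        rw [hDdef]
        have h7 : (0:ℝ) ≤ C₁ * ρ ^ (-(σ/θ)) * (1 + θ * (|Real.log t| + (1/θ) * |Real.log ρ|) + Λ) := by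
          have h1 : 0 ≤ θ * (|Real.log t| + (1/θ) * |Real.log ρ|) := by positivity
          have h2 : (0:ℝ) < ρ ^ (-(σ / θ)) := Real.rpow_pos_of_pos hρ0 _
          have h4 : 0 ≤ 1 + θ * (|Real.log t| + (1/θ) * |Real.log ρ|) + Λ := by linarith
          positivity
        linarith
    calc K p = (τ ^ (-σ) * G ξ) * (1 + p.1) ^ (-γ) := by rw [hKval]
      _ ≤ D * M :=
          mul_le_mul hYbound hMbound (Real.rpow_pos_of_pos h1p _).le hD0
      _ = B₂ + B₁ * τ ^ (2*α - 1) := by rw [hDdef, hB₂def, hB₁def]; ring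
      _ = (B₂ + B₁ * (t - p.1) ^ (2*α - 1)) * 1 := by rw [hτdef, mul_one]
  · have hnp : p ∉ (Set.univ : Set ℝ) ×ˢ Metric.ball (0 : Euc N) 1 := by
      simp [hy]
    rw [Set.indicator_of_notMem hnp, Set.indicator_of_notMem hy, norm_zero, mul_zero]


set_option maxHeartbeats 1600000 in
theorem pointwise_lower_intermediate
    (N : ℕ) (hN : 1 ≤ N) (α β : ℝ) (hα0 : 0 < α) (hα1 : α < 1)
    (hβ0 : 0 < β) (hβ1 : β ≤ 1) (hNβ : (N : ℝ) ≤ 4 * β)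
    (G : Euc N → ℝ) (C₁ : ℝ) (hC₁ : 0 < C₁)
    (hGcont : ContinuousOn G {(0 : Euc N)}ᶜ)
    (hGpos : ∀ ξ : Euc N, ξ ≠ 0 → 0 < G ξ)
    (hGin₁ : (N : ℝ) < 4 * β → ∀ ξ : Euc N, ξ ≠ 0 → ‖ξ‖ ≤ 1 → G ξ ≤ C₁)
    (hGin₂ : (N : ℝ) = 4 * β → ∀ ξ : Euc N, ξ ≠ 0 → ‖ξ‖ ≤ 1 →
      G ξ ≤ C₁ * (1 + |Real.log ‖ξ‖|))
    (hGout : ∀ ξ : Euc N, 1 ≤ ‖ξ‖ → G ξ ≤ C₁ * ‖ξ‖ ^ (-((N : ℝ) + 2 * β)))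
    (c₁ : ℝ) (hc₁ : 0 < c₁)
    (hGlow₁ : (N : ℝ) < 4 * β → ∀ ξ : Euc N, ξ ≠ 0 → ‖ξ‖ ≤ 1 → c₁ ≤ G ξ)
    (hGlow₂ : (N : ℝ) = 4 * β → ∀ ξ : Euc N, ξ ≠ 0 → ‖ξ‖ ≤ 1 →
      c₁ * (1 + |Real.log ‖ξ‖|) ≤ G ξ)
    (γ : ℝ) (h2β : 2 * β ≤ (N : ℝ)) :
    ∃ c δ T : ℝ, 0 < c ∧ 0 < δ ∧ δ < 1 ∧ 2 ≤ T ∧ ∀ t : ℝ, T ≤ t →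
      ∀ x : Euc N, 1 < ‖x‖ → ‖x‖ ≤ δ * t ^ thetaV α β →
      ((N : ℝ) = 2 * β →
        c * t ^ (-γ) * Real.log (t ^ thetaV α β / ‖x‖) ≤ mildSol N α β G (fun (y : Euc N) (s : ℝ) => Set.indicator (Metric.ball (0 : Euc N) 1) (fun _ => (1 + s) ^ (-γ)) y) x t) ∧
      (2 * β < (N : ℝ) →
        c * t ^ (-γ) * ‖x‖ ^ (2 * β - (N : ℝ)) ≤ mildSol N α β G (fun (y : Euc N) (s : ℝ) => Set.indicator (Metric.ball (0 : Euc N) 1) (fun _ => (1 + s) ^ (-γ)) y) x t) := by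
  haveI : Nonempty (Fin N) := ⟨⟨0, hN⟩⟩
  haveI : Nontrivial (Euc N) := inferInstance
  -- unified G bounds
  have hGub : ∀ ξ : Euc N, ξ ≠ 0 → ‖ξ‖ ≤ 1 → G ξ ≤ C₁ * (1 + |Real.log ‖ξ‖|) := by
    rcases lt_or_eq_of_le hNβ with h | h
    · intro ξ h0 h1
      have h2 := hGin₁ h ξ h0 h1
      nlinarith [abs_nonneg (Real.log ‖ξ‖)]
    · exact fun ξ h0 h1 => hGin₂ h ξ h0 h1
  have hGlb : ∀ ξ : Euc N, ξ ≠ 0 → ‖ξ‖ ≤ 1 → c₁ ≤ G ξ := by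
    rcases lt_or_eq_of_le hNβ with h | h
    · exact fun ξ h0 h1 => hGlow₁ h ξ h0 h1
    · intro ξ h0 h1
      have h2 := hGlow₂ h ξ h0 h1
      nlinarith [abs_nonneg (Real.log ‖ξ‖)]
  -- basic numerical facts
  have hN1 : (1:ℝ) ≤ (N:ℝ) := by exact_mod_cast hN
  have hN4 : (N:ℝ) ≤ 4 := by linarith
  have hθ0 : 0 < thetaV α β := div_pos hα0 (by linarith)
  have hθ2 : thetaV α β < 2 := by
    rw [thetaV, div_lt_iff₀ (by linarith : (0:ℝ) < 2*β)]
    linarith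
  have hσ1 : 1 ≤ sigmaStar N α β := by
    have key : α ≤ (N:ℝ) * (α/(2*β)) := by
      rw [mul_div_assoc', le_div_iff₀ (by linarith : (0:ℝ) < 2*β)]
      nlinarith
    rw [sigmaStar, thetaV]; linarith
  have hσ2 : sigmaStar N α β < 2 := by
    have key : (N:ℝ) * (α/(2*β)) ≤ 2*α := by
      rw [mul_div_assoc', div_le_iff₀ (by linarith : (0:ℝ) < 2*β)]
      nlinarith
    rw [sigmaStar, thetaV]; linarith
  have hσ0 : 0 < sigmaStar N α β := by linarith
  have hV : 0 < (volume (Metric.ball (0 : Euc N) 1)).toReal :=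
    ENNReal.toReal_pos (Metric.measure_ball_pos volume 0 one_pos).ne' measure_ball_lt_top.ne
  set V : ℝ := (volume (Metric.ball (0 : Euc N) 1)).toReal with hVdef
  have h2γ : (0:ℝ) < (2:ℝ) ^ (-|γ|) := Real.rpow_pos_of_pos (by norm_num) _
  refine ⟨c₁ * (2:ℝ) ^ (-|γ|) * V / 64, 1/4096, 2, by positivity, by norm_num, by norm_num,
    le_refl 2, ?_⟩
  intro t ht x hx1 hxδ
  have ht0 : (0:ℝ) < t := by linarith
  have htθ : (0:ℝ) < t ^ thetaV α β := Real.rpow_pos_of_pos ht0 _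
  have hx0 : (0:ℝ) < ‖x‖ := by linarith
  have htγ : (0:ℝ) < t ^ (-γ) := Real.rpow_pos_of_pos ht0 _
  set a : ℝ := (2*‖x‖) ^ (1/thetaV α β) with hadef
  have ha0 : 0 < a := Real.rpow_pos_of_pos (by linarith) _
  have haθ : a ^ thetaV α β = 2*‖x‖ := by
    rw [hadef, ← Real.rpow_mul (by linarith : (0:ℝ) ≤ 2*‖x‖),
      one_div_mul_cancel hθ0.ne', Real.rpow_one]
  have hat : a ≤ t/32 := by
    by_contra hcon
    push_neg at hcon
    have h1 : (t/32) ^ thetaV α β < a ^ thetaV α β :=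
      Real.rpow_lt_rpow (by linarith) hcon hθ0
    have h2 : (t/32) ^ thetaV α β = t ^ thetaV α β / (32:ℝ) ^ thetaV α β :=
      Real.div_rpow ht0.le (by norm_num : (0:ℝ) ≤ 32) _
    have h3 : (32:ℝ) ^ thetaV α β ≤ 1024 := by
      calc (32:ℝ) ^ thetaV α β ≤ (32:ℝ) ^ (2:ℝ) :=
            Real.rpow_le_rpow_of_exponent_le (by norm_num) hθ2.le
        _ = 1024 := by
            rw [show (2:ℝ) = ((2:ℕ):ℝ) by norm_num, Real.rpow_natCast]; norm_num
    have h4 : t ^ thetaV α β / 1024 ≤ t ^ thetaV α β / (32:ℝ) ^ thetaV α β := by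
      apply div_le_div_of_nonneg_left htθ.le (Real.rpow_pos_of_pos (by norm_num) _) h3
    have h5 : 2*‖x‖ ≤ t ^ thetaV α β / 2048 := by linarith
    rw [haθ, h2] at h1
    linarith
  -- integrability
  have hH := integrable_H N hN α β hα0 hα1 hβ0 G C₁ hC₁ hGcont hGpos hGub hGout γ x hx1 t ht
  set g : ℝ → ℝ := fun s => ∫ y, kernelY N α β G (x - y) (t - s) *
      Set.indicator (Metric.ball (0 : Euc N) 1) (fun _ => (1 + s) ^ (-γ)) y with hgdef
  have hgint : IntegrableOn g (Ioo (0:ℝ) t) volume := hH.integral_prod_left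
  have hmild : mildSol N α β G
      (fun (y : Euc N) (s : ℝ) => Set.indicator (Metric.ball (0 : Euc N) 1)
        (fun _ => (1 + s) ^ (-γ)) y) x t = ∫ s in Ioo (0:ℝ) t, g s := rfl
  have hgnn : ∀ s ∈ Ioo (0:ℝ) t, 0 ≤ g s := by
    intro s hs
    apply integral_nonneg
    intro y
    simp only [Pi.zero_apply]
    by_cases hy : y ∈ Metric.ball (0 : Euc N) 1
    · have hyx : x - y ≠ 0 := by
        refine sub_ne_zero.2 (fun h => ?_)
        have : ‖y‖ < 1 := by simpa using hy
        rw [← h] at this; linarith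
      have hts : 0 < t - s := by have := hs.2; linarith
      have hker : 0 ≤ kernelY N α β G (x - y) (t - s) := by
        rw [kernelY]
        have h1 : (0:ℝ) < (t - s) ^ (-(sigmaStar N α β)) := Real.rpow_pos_of_pos hts _
        have h2 : 0 < G (((t - s) ^ (-(thetaV α β))) • (x - y)) :=
          hGpos _ (smul_ne_zero (ne_of_gt (Real.rpow_pos_of_pos hts _)) hyx)
        positivity
      have hind : 0 ≤ Set.indicator (Metric.ball (0 : Euc N) 1)
          (fun _ => (1 + s) ^ (-γ)) y := by
        rw [Set.indicator_of_mem hy]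
        have : (0:ℝ) < 1 + s := by have := hs.1; linarith
        positivity
      exact mul_nonneg hker hind
    · simp [Set.indicator_of_notMem hy]
  -- the key estimate
  have key : ∀ b : ℝ, a ≤ b → b ≤ t/2 →
      (c₁ * ((2:ℝ) ^ (-|γ|) * t ^ (-γ)) * V) * (∫ τ in a..b, τ ^ (-(sigmaStar N α β))) ≤
        ∫ s in Ioo (0:ℝ) t, g s := by
    intro b hab hbt
    have hsub : Icc (t-b) (t-a) ⊆ Ioo (0:ℝ) t := by
      intro s hs
      constructor
      · have := hs.1; linarith
      · have := hs.2; linarith [ha0]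
    have step1 : ∫ s in Icc (t-b) (t-a), g s ≤ ∫ s in Ioo (0:ℝ) t, g s :=
      setIntegral_mono_set hgint
        ((ae_restrict_iff' measurableSet_Ioo).2 (ae_of_all _ fun s hs => hgnn s hs))
        (HasSubset.Subset.eventuallyLE hsub)
    have hglow : ∀ s ∈ Icc (t-b) (t-a),
        (c₁ * ((2:ℝ)^(-|γ|) * t^(-γ)) * V) * (t-s) ^ (-(sigmaStar N α β)) ≤ g s := by
      intro s hs
      have hs2 : t/2 ≤ s := by have := hs.1; linarith
      have hst : s ≤ t := by have := hs.2; linarith [ha0]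
      have hτa : a ≤ t - s := by have := hs.2; linarith
      have hτ0 : 0 < t - s := lt_of_lt_of_le ha0 hτa
      have hfun : (fun y : Euc N => kernelY N α β G (x - y) (t - s) *
          Set.indicator (Metric.ball (0:Euc N) 1) (fun _ => (1+s)^(-γ)) y)
          = Set.indicator (Metric.ball (0:Euc N) 1)
            (fun y => kernelY N α β G (x - y) (t - s) * (1+s)^(-γ)) := by
        funext y
        by_cases hy : y ∈ Metric.ball (0:Euc N) 1
        · rw [Set.indicator_of_mem hy, Set.indicator_of_mem hy]
        · rw [Set.indicator_of_notMem hy, Set.indicator_of_notMem hy, mul_zero]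
      have hgs : g s = ∫ y in Metric.ball (0:Euc N) 1,
          kernelY N α β G (x - y) (t - s) * (1+s)^(-γ) := by
        simp only [hgdef]
        rw [hfun, integral_indicator measurableSet_ball]
      have hcont : ContinuousOn (fun y : Euc N =>
          kernelY N α β G (x - y) (t - s) * (1+s)^(-γ))
          (Metric.closedBall (0:Euc N) 1) := by
        have hmaps : ∀ y ∈ Metric.closedBall (0:Euc N) 1,
            ((t - s) ^ (-(thetaV α β))) • (x - y) ∈ ({(0:Euc N)}ᶜ : Set (Euc N)) := by
          intro y hy
          have hy1 : ‖y‖ ≤ 1 := by simpa using hy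
          have hxy : x - y ≠ 0 := sub_ne_zero.2 (fun h => by rw [h] at hx1; linarith)
          simp only [Set.mem_compl_iff, Set.mem_singleton_iff]
          exact smul_ne_zero (ne_of_gt (Real.rpow_pos_of_pos hτ0 _)) hxy
        have hGc : ContinuousOn (fun y : Euc N =>
            G (((t - s) ^ (-(thetaV α β))) • (x - y))) (Metric.closedBall (0:Euc N) 1) :=
          hGcont.comp (show ContinuousOn (fun y : Euc N => ((t - s) ^ (-(thetaV α β))) • (x - y)) _ from (by fun_prop :
            Continuous fun y : Euc N => ((t - s) ^ (-(thetaV α β))) • (x - y)).continuousOn) hmaps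
        have heq : (fun y : Euc N => kernelY N α β G (x - y) (t - s) * (1+s)^(-γ))
            = fun y => ((t-s) ^ (-(sigmaStar N α β)) *
              G (((t - s) ^ (-(thetaV α β))) • (x - y))) * (1+s)^(-γ) := rfl
        rw [heq]
        exact (continuousOn_const.mul hGc).mul continuousOn_const
      have hint : IntegrableOn (fun y : Euc N =>
          kernelY N α β G (x - y) (t - s) * (1+s)^(-γ)) (Metric.ball (0:Euc N) 1) volume :=
        (hcont.integrableOn_compact (isCompact_closedBall _ _)).mono_set
          Metric.ball_subset_closedBall
      have hpt : ∀ y ∈ Metric.ball (0:Euc N) 1,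
          (c₁ * ((2:ℝ)^(-|γ|) * t^(-γ))) * (t-s) ^ (-(sigmaStar N α β)) ≤
            kernelY N α β G (x - y) (t - s) * (1+s)^(-γ) := by
        intro y hy
        have hy1 : ‖y‖ < 1 := by simpa using hy
        have hxy : x - y ≠ 0 := sub_ne_zero.2 (fun h => by rw [h] at hx1; linarith)
        have hξ0 : ((t - s) ^ (-(thetaV α β))) • (x - y) ≠ 0 :=
          smul_ne_zero (ne_of_gt (Real.rpow_pos_of_pos hτ0 _)) hxy
        have hξ1 : ‖((t - s) ^ (-(thetaV α β))) • (x - y)‖ ≤ 1 := by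
          rw [norm_smul, Real.norm_eq_abs,
            abs_of_pos (Real.rpow_pos_of_pos hτ0 _), Real.rpow_neg hτ0.le,
            inv_mul_eq_div, div_le_one (Real.rpow_pos_of_pos hτ0 _)]
          have h1 : ‖x - y‖ ≤ 2*‖x‖ := by
            have := norm_sub_le x y; linarith
          have h2 : a ^ thetaV α β ≤ (t-s) ^ thetaV α β :=
            Real.rpow_le_rpow ha0.le hτa hθ0.le
          rw [haθ] at h2; linarith
        have hGl := hGlb _ hξ0 hξ1
        have hslow : (2:ℝ)^(-|γ|) * t^(-γ) ≤ (1+s) ^ (-γ) := by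
          rcases le_or_gt 0 γ with hγ | hγ
          · have h1 : 1 + s ≤ 2*t := by linarith
            have h2 : (2*t) ^ (-γ) ≤ (1+s) ^ (-γ) :=
              Real.rpow_le_rpow_of_nonpos (by linarith) h1 (neg_nonpos.2 hγ)
            have h3 : (2*t) ^ (-γ) = 2^(-γ) * t^(-γ) :=
              Real.mul_rpow (by norm_num) ht0.le
            rw [abs_of_nonneg hγ, ← h3]
            exact h2
          · have h1 : t/2 ≤ 1 + s := by linarith
            have h2 : (t/2) ^ (-γ) ≤ (1+s) ^ (-γ) :=
              Real.rpow_le_rpow (by linarith) h1 (by linarith)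
            have h3 : (t/2) ^ (-γ) = t^(-γ) * 2^γ := by
              rw [div_eq_mul_inv, Real.mul_rpow ht0.le (by norm_num),
                Real.inv_rpow (by norm_num : (0:ℝ) ≤ 2), ← Real.rpow_neg (by norm_num : (0:ℝ) ≤ 2),
                neg_neg]
            rw [abs_of_neg hγ, neg_neg,
              show (2:ℝ)^γ * t^(-γ) = t^(-γ) * 2^γ from mul_comm _ _, ← h3]
            exact h2
        have hker : kernelY N α β G (x - y) (t - s) = (t-s)^(-(sigmaStar N α β)) *
            G (((t - s) ^ (-(thetaV α β))) • (x - y)) := rfl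
        have h5 : c₁ * (t-s)^(-(sigmaStar N α β)) ≤ kernelY N α β G (x - y) (t - s) := by
          rw [hker]
          calc c₁ * (t-s)^(-(sigmaStar N α β))
              = (t-s)^(-(sigmaStar N α β)) * c₁ := mul_comm _ _
            _ ≤ (t-s)^(-(sigmaStar N α β)) * G (((t - s) ^ (-(thetaV α β))) • (x - y)) :=
                mul_le_mul_of_nonneg_left hGl (Real.rpow_pos_of_pos hτ0 _).le
        have hkernn : 0 ≤ kernelY N α β G (x - y) (t - s) := by
          refine le_trans ?_ h5
          have : (0:ℝ) < (t-s)^(-(sigmaStar N α β)) := Real.rpow_pos_of_pos hτ0 _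
          positivity
        calc (c₁ * ((2:ℝ)^(-|γ|) * t^(-γ))) * (t-s) ^ (-(sigmaStar N α β))
            = (c₁ * (t-s)^(-(sigmaStar N α β))) * ((2:ℝ)^(-|γ|) * t^(-γ)) := by ring
          _ ≤ kernelY N α β G (x - y) (t - s) * (1+s)^(-γ) :=
              mul_le_mul h5 hslow (by positivity) hkernn
      have hconst := setIntegral_ge_of_const_le measurableSet_ball measure_ball_lt_top.ne hpt hint
      rw [hgs]
      have hre : (c₁ * ((2:ℝ)^(-|γ|) * t^(-γ)) * V) * (t-s) ^ (-(sigmaStar N α β))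
          = (c₁ * ((2:ℝ)^(-|γ|) * t^(-γ)) * (t-s) ^ (-(sigmaStar N α β))) * V := by ring
      rw [hre, hVdef]
      rw [smul_eq_mul, mul_comm] at hconst
      exact hconst
    have hIccint : IntegrableOn (fun s => (c₁ * ((2:ℝ)^(-|γ|) * t^(-γ)) * V) *
        (t-s) ^ (-(sigmaStar N α β))) (Icc (t-b) (t-a)) volume := by
      apply ContinuousOn.integrableOn_compact isCompact_Icc
      refine continuousOn_const.mul ?_
      refine ((continuous_const.sub continuous_id).continuousOn).rpow_const ?_
      intro s hs; left
      have : a ≤ t - s := by have := hs.2; linarith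
      exact ne_of_gt (lt_of_lt_of_le ha0 this)
    have step3 : ∫ s in Icc (t-b) (t-a), (c₁ * ((2:ℝ)^(-|γ|) * t^(-γ)) * V) *
        (t-s) ^ (-(sigmaStar N α β)) ≤ ∫ s in Icc (t-b) (t-a), g s :=
      setIntegral_mono_on hIccint (hgint.mono_set hsub) measurableSet_Icc hglow
    have step4 : ∫ s in Icc (t-b) (t-a), (c₁ * ((2:ℝ)^(-|γ|) * t^(-γ)) * V) *
        (t-s) ^ (-(sigmaStar N α β))
        = (c₁ * ((2:ℝ)^(-|γ|) * t^(-γ)) * V) * ∫ τ in a..b, τ ^ (-(sigmaStar N α β)) := by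
      rw [integral_Icc_eq_integral_Ioc,
        ← intervalIntegral.integral_of_le (by linarith : t-b ≤ t-a),
        intervalIntegral.integral_const_mul,
        intervalIntegral.integral_comp_sub_left (fun τ => τ ^ (-(sigmaStar N α β))) t,
        sub_sub_cancel, sub_sub_cancel]
    rw [← step4]
    exact le_trans step3 step1

  constructor
  · -- case N = 2β
    intro hNeq
    have hσeq : sigmaStar N α β = 1 := by
      rw [sigmaStar, thetaV, hNeq]; field_simp; ring
    have hkey := key (t/2) (by linarith) (le_refl _)
    have hI : (∫ τ in a..(t/2), τ ^ (-(sigmaStar N α β))) = Real.log ((t/2)/a) := by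
      rw [hσeq]
      simp only [Real.rpow_neg_one]
      exact integral_inv (Set.notMem_uIcc_of_lt ha0 (by linarith))
    set L := Real.log (t ^ thetaV α β / ‖x‖) with hLdef
    have hlog2 : (0:ℝ) < Real.log 2 := Real.log_pos (by norm_num)
    have hL12 : 12 * Real.log 2 ≤ L := by
      have h1 : (4096:ℝ) ≤ t ^ thetaV α β / ‖x‖ := by
        rw [le_div_iff₀ hx0]; linarith
      have h2 : Real.log 4096 ≤ L := by
        rw [hLdef]; exact Real.log_le_log (by norm_num) h1
      have h3 : Real.log 4096 = 12 * Real.log 2 := by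
        rw [show (4096:ℝ) = 2^(12:ℕ) by norm_num, Real.log_pow]; norm_num
      linarith
    have hL0 : 0 < L := by linarith
    have hXexp : thetaV α β * Real.log ((t/2)/a) = L - (thetaV α β + 1) * Real.log 2 := by
      have e1 : Real.log ((t/2)/a) = Real.log (t/2) - Real.log a :=
        Real.log_div (by positivity) ha0.ne'
      have e2 : Real.log (t/2) = Real.log t - Real.log 2 :=
        Real.log_div ht0.ne' (by norm_num)
      have e3 : Real.log a = (1/thetaV α β) * Real.log (2*‖x‖) := by
        rw [hadef, Real.log_rpow (by linarith : (0:ℝ) < 2*‖x‖)]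
      have e4 : Real.log (2*‖x‖) = Real.log 2 + Real.log ‖x‖ :=
        Real.log_mul (by norm_num) hx0.ne'
      have e5 : L = thetaV α β * Real.log t - Real.log ‖x‖ := by
        rw [hLdef, Real.log_div (ne_of_gt htθ) hx0.ne', Real.log_rpow ht0]
      rw [e1, e2, e3, e4, e5]
      field_simp
      ring
    have hX0 : 0 ≤ Real.log ((t/2)/a) :=
      Real.log_nonneg ((one_le_div ha0).2 (by linarith))
    have hXL : L/64 ≤ Real.log ((t/2)/a) := by
      have h1 : (thetaV α β + 1) * Real.log 2 ≤ 3 * Real.log 2 := by nlinarith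
      have h2 : 3 * Real.log 2 ≤ L/4 := by linarith
      have h3 : (3/4) * L ≤ thetaV α β * Real.log ((t/2)/a) := by
        rw [hXexp]; linarith
      have h4 : thetaV α β * Real.log ((t/2)/a) ≤ 2 * Real.log ((t/2)/a) :=
        mul_le_mul_of_nonneg_right hθ2.le hX0
      linarith
    rw [hI] at hkey
    have hC0 : 0 ≤ c₁ * ((2:ℝ)^(-|γ|) * t^(-γ)) * V := by positivity
    have hre : c₁ * (2:ℝ)^(-|γ|) * V / 64 * t^(-γ) * L
        = (c₁ * ((2:ℝ)^(-|γ|) * t^(-γ)) * V) * (L/64) := by ring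
    rw [hmild, hre]
    calc (c₁ * ((2:ℝ)^(-|γ|) * t^(-γ)) * V) * (L/64)
        ≤ (c₁ * ((2:ℝ)^(-|γ|) * t^(-γ)) * V) * Real.log ((t/2)/a) :=
          mul_le_mul_of_nonneg_left hXL hC0
      _ ≤ _ := hkey
  · -- case 2β < N
    intro hlt
    have hb2 : 2*a ≤ t/2 := by linarith
    have hkey := key (2*a) (by linarith) hb2
    have hIlow : (1/64) * ‖x‖^(2*β - (N:ℝ)) ≤ ∫ τ in a..(2*a), τ ^ (-(sigmaStar N α β)) := by
      have hmono : ∫ τ in a..(2*a), ((2*a) ^ (-(sigmaStar N α β)) : ℝ)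
          ≤ ∫ τ in a..(2*a), τ ^ (-(sigmaStar N α β)) := by
        refine intervalIntegral.integral_mono_on (by linarith) intervalIntegrable_const ?_ ?_
        · refine ContinuousOn.intervalIntegrable ?_
          refine continuousOn_id.rpow_const ?_
          intro τ hτ; left
          rw [uIcc_of_le (by linarith : a ≤ 2*a)] at hτ
          have : a ≤ τ := hτ.1
          exact ne_of_gt (lt_of_lt_of_le ha0 this)
        · intro τ hτ
          exact Real.rpow_le_rpow_of_nonpos (lt_of_lt_of_le ha0 hτ.1) hτ.2
            (neg_nonpos.2 hσ0.le)
      have hconstval : ∫ τ in a..(2*a), ((2*a) ^ (-(sigmaStar N α β)) : ℝ)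
          = a * (2*a) ^ (-(sigmaStar N α β)) := by
        rw [intervalIntegral.integral_const, smul_eq_mul]; ring_nf
      rw [hconstval] at hmono
      have heq : a * (2*a) ^ (-(sigmaStar N α β))
          = 2^(-(sigmaStar N α β)) * (2^(2*β-(N:ℝ)) * ‖x‖^(2*β-(N:ℝ))) := by
        rw [Real.mul_rpow (by norm_num : (0:ℝ) ≤ 2) ha0.le]
        have e1 : a * a ^ (-(sigmaStar N α β)) = a ^ (1 - sigmaStar N α β) := by
          nth_rewrite 1 [← Real.rpow_one a]
          rw [← Real.rpow_add ha0]
          ring_nf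
        have e2 : a ^ (1 - sigmaStar N α β) = (2*‖x‖) ^ (2*β - (N:ℝ)) := by
          rw [hadef, ← Real.rpow_mul (by linarith : (0:ℝ) ≤ 2*‖x‖)]
          congr 1
          rw [sigmaStar, thetaV]
          field_simp
          ring
        have e3 : (2*‖x‖) ^ (2*β - (N:ℝ)) = 2^(2*β-(N:ℝ)) * ‖x‖^(2*β-(N:ℝ)) :=
          Real.mul_rpow (by norm_num) hx0.le
        calc a * (2 ^ (-(sigmaStar N α β)) * a ^ (-(sigmaStar N α β)))
            = 2 ^ (-(sigmaStar N α β)) * (a * a ^ (-(sigmaStar N α β))) := by ring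
          _ = _ := by rw [e1, e2, e3]
      have h5 : (1/4 : ℝ) ≤ 2 ^ (-(sigmaStar N α β)) := by
        have h5a := Real.rpow_le_rpow_of_exponent_le (by norm_num : (1:ℝ) ≤ 2)
          (by linarith : -(2:ℝ) ≤ -(sigmaStar N α β))
        have h25 : (2:ℝ) ^ (-(2:ℝ)) = 1/4 := by
          rw [show (-2:ℝ) = ((-2:ℤ):ℝ) by norm_num, Real.rpow_intCast]; norm_num
        rw [h25] at h5a; exact h5a
      have h6 : (1/16 : ℝ) ≤ 2 ^ (2*β - (N:ℝ)) := by
        have h6a := Real.rpow_le_rpow_of_exponent_le (by norm_num : (1:ℝ) ≤ 2)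
          (by linarith : -(4:ℝ) ≤ 2*β - (N:ℝ))
        have h26 : (2:ℝ) ^ (-(4:ℝ)) = 1/16 := by
          rw [show (-4:ℝ) = ((-4:ℤ):ℝ) by norm_num, Real.rpow_intCast]; norm_num
        rw [h26] at h6a; exact h6a
      have hxp : (0:ℝ) ≤ ‖x‖^(2*β-(N:ℝ)) := (Real.rpow_pos_of_pos hx0 _).le
      have hA : (1/16) * ‖x‖^(2*β-(N:ℝ)) ≤ 2^(2*β-(N:ℝ)) * ‖x‖^(2*β-(N:ℝ)) :=
        mul_le_mul_of_nonneg_right h6 hxp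
      have hB : 2^(-(sigmaStar N α β)) * ((1/16) * ‖x‖^(2*β-(N:ℝ)))
          ≤ 2^(-(sigmaStar N α β)) * (2^(2*β-(N:ℝ)) * ‖x‖^(2*β-(N:ℝ))) :=
        mul_le_mul_of_nonneg_left hA (Real.rpow_pos_of_pos (by norm_num) _).le
      have hCC : (1/4) * ((1/16) * ‖x‖^(2*β-(N:ℝ)))
          ≤ 2^(-(sigmaStar N α β)) * ((1/16) * ‖x‖^(2*β-(N:ℝ))) :=
        mul_le_mul_of_nonneg_right h5 (by positivity)
      rw [heq] at hmono
      linarith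
    rw [hmild]
    have hC0 : 0 ≤ c₁ * ((2:ℝ)^(-|γ|) * t^(-γ)) * V := by positivity
    have hre : c₁ * (2:ℝ)^(-|γ|) * V / 64 * t^(-γ) * ‖x‖^(2*β-(N:ℝ))
        = (c₁ * ((2:ℝ)^(-|γ|) * t^(-γ)) * V) * ((1/64) * ‖x‖^(2*β-(N:ℝ))) := by ring
    rw [hre]
    exact le_trans (mul_le_mul_of_nonneg_left hIlow hC0) hkey
end
end
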